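/- arXiv:2410.18664 — 8 statements merged into one kernel-verified Lean document; each statement's English description precedes it below -/
import Mathlib

section
/- Let S be a Polish space and let ν be a finite positive Borel measure on S. Then the order interval [0, ν] = {ν̂ a finite positive Borel measure on S : ν̂ ≤ ν (i.e., ν̂(A) ≤ ν(A) for all Borel sets A)} is compact in the topology of weak convergence of measures. -/
set_option linter.unusedSectionVars false

open MeasureTheory

open scoped ENNReal NNReal InnerProductSpace BoundedContinuousFunction

namespace CompactOrderIntervalAux

variable {S : Type*} [MetricSpace S] [MeasurableSpace S] [BorelSpace S]
variable (ν : Measure S) [IsFiniteMeasure ν]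

/-- inner product on real L² is the integral of the product. -/
lemma inner_eq_integral (f g : Lp ℝ 2 ν) : ⟪f, g⟫_ℝ = ∫ x, f x * g x ∂ν := by
  rw [L2.inner_def]
  simp [RCLike.inner_apply, conj_trivial, mul_comm]

/-- The density associated to a weak-dual element via Riesz representation. -/
noncomputable def dens (φ : WeakDual ℝ (Lp ℝ 2 ν)) : Lp ℝ 2 ν :=
  (InnerProductSpace.toDual ℝ (Lp ℝ 2 ν)).symm (WeakDual.toStrongDual φ)

lemma apply_eq_inner (φ : WeakDual ℝ (Lp ℝ 2 ν)) (g : Lp ℝ 2 ν) :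
    φ g = ⟪dens ν φ, g⟫_ℝ := by
  rw [dens, InnerProductSpace.toDual_symm_apply]
  rfl

/-- The ENNReal-valued density, truncated at 1. -/
noncomputable def psiDens (φ : WeakDual ℝ (Lp ℝ 2 ν)) : S → ℝ≥0∞ :=
  fun x ↦ min (ENNReal.ofReal ((dens ν φ) x)) 1

lemma psiDens_aemeasurable (φ : WeakDual ℝ (Lp ℝ 2 ν)) : AEMeasurable (psiDens ν φ) ν := by
  have h := (Lp.aestronglyMeasurable (dens ν φ)).aemeasurable
  exact (h.ennreal_ofReal).min aemeasurable_const

lemma psiMeasure_le (φ : WeakDual ℝ (Lp ℝ 2 ν)) : ν.withDensity (psiDens ν φ) ≤ ν := by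
  calc ν.withDensity (psiDens ν φ) ≤ ν.withDensity 1 :=
        withDensity_mono (Filter.Eventually.of_forall fun x ↦ min_le_right _ _)
  _ = ν := withDensity_one

/-- The map from the weak dual of L² to finite measures. -/
noncomputable def psi (φ : WeakDual ℝ (Lp ℝ 2 ν)) : FiniteMeasure S :=
  ⟨ν.withDensity (psiDens ν φ), isFiniteMeasure_of_le ν (psiMeasure_le ν φ)⟩

lemma psi_le (φ : WeakDual ℝ (Lp ℝ 2 ν)) : (psi ν φ : Measure S) ≤ ν :=
  psiMeasure_le ν φ

/-- The compact set of functionals corresponding to measures in `[0, ν]`. -/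
def Kset : Set (WeakDual ℝ (Lp ℝ 2 ν)) :=
  {φ | ∀ g : Lp ℝ 2 ν, 0 ≤ g → φ g ∈ Set.Icc 0 (∫ x, g x ∂ν)}

lemma isClosed_Kset : IsClosed (Kset ν) := by
  have : Kset ν = ⋂ (g : Lp ℝ 2 ν) (_ : 0 ≤ g),
      ((fun φ : WeakDual ℝ (Lp ℝ 2 ν) ↦ φ g) ⁻¹' (Set.Icc 0 (∫ x, g x ∂ν))) := by
    ext φ
    simp [Kset]
  rw [this]
  exact isClosed_iInter fun g ↦ isClosed_iInter fun _ ↦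
    isClosed_Icc.preimage (WeakDual.eval_continuous g)

/-- The constant function 1 as an element of L². -/
noncomputable def oneL : Lp ℝ 2 ν := (memLp_const (1 : ℝ)).toLp _

lemma integral_coeFn_eq_inner_oneL (g : Lp ℝ 2 ν) : ∫ x, g x ∂ν = ⟪g, oneL ν⟫_ℝ := by
  rw [inner_eq_integral]
  refine integral_congr_ae ?_
  filter_upwards [MemLp.coeFn_toLp (memLp_const (1:ℝ))] with x hx
  rw [oneL, hx, mul_one]

lemma abs_nonneg' (g : Lp ℝ 2 ν) : (0 : Lp ℝ 2 ν) ≤ |g| := by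
  rw [← Lp.coeFn_nonneg]
  filter_upwards [Lp.coeFn_abs g] with x hx
  rw [hx]
  exact abs_nonneg _

lemma isCompact_Kset : IsCompact (Kset ν) := by
  refine IsCompact.of_isClosed_subset
    (WeakDual.isCompact_closedBall (0 : StrongDual ℝ (Lp ℝ 2 ν)) ‖oneL ν‖)
    (isClosed_Kset ν) ?_
  intro φ hφ
  simp only [Set.mem_preimage, Metric.mem_closedBall, dist_zero_right]
  refine ContinuousLinearMap.opNorm_le_bound _ (norm_nonneg _) fun g ↦ ?_
  have hsub : (0 : Lp ℝ 2 ν) ≤ |g| - g := sub_nonneg.mpr (le_abs_self g)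
  have hadd : (0 : Lp ℝ 2 ν) ≤ |g| + g := by
    calc (0 : Lp ℝ 2 ν) = -g + g := by abel
    _ ≤ |g| + g := add_le_add (neg_le_abs g) le_rfl
  have h1 : φ g ≤ φ |g| := by
    have := (hφ (|g| - g) hsub).1
    rw [map_sub] at this
    linarith
  have h2 : -φ g ≤ φ |g| := by
    have := (hφ (|g| + g) hadd).1
    rw [map_add] at this
    linarith
  have h3 : φ |g| ≤ ∫ x, (|g| : Lp ℝ 2 ν) x ∂ν := (hφ |g| (abs_nonneg' ν g)).2
  have h4 : ∫ x, (|g| : Lp ℝ 2 ν) x ∂ν = ⟪(|g| : Lp ℝ 2 ν), oneL ν⟫_ℝ :=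
    integral_coeFn_eq_inner_oneL ν |g|
  have h5 : ⟪(|g| : Lp ℝ 2 ν), oneL ν⟫_ℝ ≤ ‖(|g| : Lp ℝ 2 ν)‖ * ‖oneL ν‖ :=
    real_inner_le_norm _ _
  have h6 : ‖(|g| : Lp ℝ 2 ν)‖ = ‖g‖ := norm_abs_eq_norm g
  have habs : |φ g| ≤ φ |g| := abs_le.mpr ⟨by linarith, h1⟩
  calc ‖(WeakDual.toStrongDual φ) g‖ = |φ g| := rfl
  _ ≤ φ |g| := habs
  _ ≤ ‖g‖ * ‖oneL ν‖ := by rw [← h6]; linarith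
  _ = ‖oneL ν‖ * ‖g‖ := mul_comm _ _

lemma dens_integrable (φ : WeakDual ℝ (Lp ℝ 2 ν)) : Integrable (dens ν φ) ν :=
  (Lp.memLp (dens ν φ)).integrable one_le_two

lemma indicator_nonneg' {s : Set S} (hs : MeasurableSet s) (hνs : ν s ≠ ⊤) :
    (0 : Lp ℝ 2 ν) ≤ indicatorConstLp 2 hs hνs (1 : ℝ) := by
  rw [← Lp.coeFn_nonneg]
  filter_upwards [indicatorConstLp_coeFn (p := 2) (hs := hs) (hμs := hνs) (c := (1 : ℝ))]
    with x hx
  rw [hx]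
  exact Set.indicator_apply_nonneg fun _ ↦ zero_le_one

lemma setIntegral_dens (φ : WeakDual ℝ (Lp ℝ 2 ν)) {s : Set S} (hs : MeasurableSet s)
    (hνs : ν s ≠ ⊤) :
    φ (indicatorConstLp 2 hs hνs (1 : ℝ)) = ∫ x in s, dens ν φ x ∂ν := by
  rw [apply_eq_inner, real_inner_comm,
    L2.inner_indicatorConstLp_eq_inner_setIntegral (𝕜 := ℝ) hs hνs (1 : ℝ) (dens ν φ)]
  simp [RCLike.inner_apply, conj_trivial]

lemma dens_nonneg {φ : WeakDual ℝ (Lp ℝ 2 ν)} (hφ : φ ∈ Kset ν) :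
    0 ≤ᵐ[ν] ⇑(dens ν φ) := by
  refine ae_nonneg_of_forall_setIntegral_nonneg (dens_integrable ν φ) fun s hs hνs ↦ ?_
  rw [← setIntegral_dens ν φ hs hνs.ne]
  exact (hφ _ (indicator_nonneg' ν hs hνs.ne)).1

lemma dens_le_one {φ : WeakDual ℝ (Lp ℝ 2 ν)} (hφ : φ ∈ Kset ν) :
    ⇑(dens ν φ) ≤ᵐ[ν] fun _ ↦ (1 : ℝ) := by
  refine ae_le_of_forall_setIntegral_le (dens_integrable ν φ) (integrable_const (1 : ℝ))
    fun s hs hνs ↦ ?_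
  rw [← setIntegral_dens ν φ hs hνs.ne]
  have h2 := (hφ _ (indicator_nonneg' ν hs hνs.ne)).2
  rw [integral_indicatorConstLp hs hνs.ne] at h2
  simpa using h2

lemma psiDens_ae {φ : WeakDual ℝ (Lp ℝ 2 ν)} (hφ : φ ∈ Kset ν) :
    psiDens ν φ =ᵐ[ν] fun x ↦ ENNReal.ofReal (dens ν φ x) := by
  filter_upwards [dens_le_one ν hφ] with x hx
  exact min_eq_left (ENNReal.ofReal_le_one.mpr hx)

lemma bcnn_memℒp (g : S →ᵇ ℝ≥0) : MemLp (fun x ↦ (g x : ℝ)) 2 ν := by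
  have hc : Continuous fun x ↦ (g x : ℝ) := NNReal.continuous_coe.comp g.continuous
  refine MemLp.of_bound hc.aestronglyMeasurable (nndist g 0 : ℝ) ?_
  refine Filter.Eventually.of_forall fun x ↦ ?_
  rw [Real.norm_eq_abs, abs_of_nonneg (g x).coe_nonneg]
  exact_mod_cast BoundedContinuousFunction.NNReal.upper_bound g x

/-- A nonnegative bounded continuous function as an element of L². -/
noncomputable def bcnnLp (g : S →ᵇ ℝ≥0) : Lp ℝ 2 ν := (bcnn_memℒp ν g).toLp _

lemma psi_testAgainstNN {φ : WeakDual ℝ (Lp ℝ 2 ν)} (hφ : φ ∈ Kset ν) (g : S →ᵇ ℝ≥0) :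
    (psi ν φ).testAgainstNN g = Real.toNNReal (φ (bcnnLp ν g)) := by
  set d := dens ν φ with hd
  have hd0 := dens_nonneg ν hφ
  have hd1 := dens_le_one ν hφ
  have hgmeas : Measurable fun x ↦ (g x : ℝ≥0∞) :=
    measurable_coe_nnreal_ennreal.comp g.continuous.measurable
  have hint : Integrable (fun x ↦ d x * (g x : ℝ)) ν := by
    refine Integrable.bdd_mul (c := 1) ((bcnn_memℒp ν g).integrable one_le_two)
      (Lp.aestronglyMeasurable d) ?_
    filter_upwards [hd0, hd1] with x h0 h1
    rw [Real.norm_eq_abs, abs_of_nonneg h0]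
    exact h1
  have key : ∫⁻ x, (g x : ℝ≥0∞) ∂(ν.withDensity (psiDens ν φ))
      = ENNReal.ofReal (∫ x, d x * (g x : ℝ) ∂ν) := by
    rw [withDensity_congr_ae (psiDens_ae ν hφ)]
    rw [lintegral_withDensity_eq_lintegral_mul₀
      ((Lp.aestronglyMeasurable d).aemeasurable.ennreal_ofReal) hgmeas.aemeasurable]
    rw [ofReal_integral_eq_lintegral_ofReal hint
      (by filter_upwards [hd0] with x hx; exact mul_nonneg hx (g x).coe_nonneg)]
    refine lintegral_congr_ae ?_
    filter_upwards [hd0] with x hx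
    simp [ENNReal.ofReal_mul (show (0:ℝ) ≤ d x from hx)]
  have h2 : φ (bcnnLp ν g) = ∫ x, d x * (g x : ℝ) ∂ν := by
    rw [apply_eq_inner, inner_eq_integral]
    refine integral_congr_ae ?_
    filter_upwards [MemLp.coeFn_toLp (bcnn_memℒp ν g)] with x hx
    rw [bcnnLp, hx]
  show (∫⁻ x, (g x : ℝ≥0∞) ∂(ν.withDensity (psiDens ν φ))).toNNReal = _
  rw [key, h2]
  simp [ENNReal.ofReal]

lemma continuousOn_psi : ContinuousOn (psi ν) (Kset ν) := by
  rw [continuousOn_iff_continuous_restrict]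
  apply continuous_induced_rng.mpr
  refine WeakBilin.continuous_of_continuous_eval _ fun g ↦ ?_
  have heq : (fun (φ : Kset ν) ↦ ((psi ν φ.1).toWeakDualBCNN g)) =
      fun (φ : Kset ν) ↦ Real.toNNReal ((φ : WeakDual ℝ (Lp ℝ 2 ν)) (bcnnLp ν g)) := by
    funext φ
    exact psi_testAgainstNN ν φ.2 g
  show Continuous fun (φ : Kset ν) ↦ ((psi ν φ.1).toWeakDualBCNN g)
  rw [heq]
  exact continuous_real_toNNReal.comp ((WeakDual.eval_continuous _).comp continuous_subtype_val)

lemma exists_psi_eq (μ : FiniteMeasure S) (hμ : (μ : Measure S) ≤ ν) :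
    ∃ φ ∈ Kset ν, psi ν φ = μ := by
  have hac : (μ : Measure S) ≪ ν := hμ.absolutelyContinuous
  set f0 := (μ : Measure S).rnDeriv ν with hf0
  have hle1 : f0 ≤ᵐ[ν] 1 := Measure.rnDeriv_le_one_of_le hμ
  have hfr_meas : Measurable fun x ↦ (f0 x).toReal :=
    (Measure.measurable_rnDeriv _ _).ennreal_toReal
  have htoReal_le : ∀ x, f0 x ≤ (1 : S → ℝ≥0∞) x → (f0 x).toReal ≤ 1 := by
    intro x hx
    have := ENNReal.toReal_mono (by simp) hx
    simpa using this
  have hmem : MemLp (fun x ↦ (f0 x).toReal) 2 ν := by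
    refine MemLp.of_bound hfr_meas.aestronglyMeasurable 1 ?_
    filter_upwards [hle1] with x hx
    rw [Real.norm_eq_abs, abs_of_nonneg ENNReal.toReal_nonneg]
    exact htoReal_le x hx
  set fL : Lp ℝ 2 ν := hmem.toLp _ with hfL
  set φ : WeakDual ℝ (Lp ℝ 2 ν) :=
    StrongDual.toWeakDual (InnerProductSpace.toDual ℝ _ fL) with hφdef
  have hdens : dens ν φ = fL := by
    rw [dens, hφdef]
    simp
  have hfL_ae : ⇑fL =ᵐ[ν] fun x ↦ (f0 x).toReal := MemLp.coeFn_toLp hmem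
  have happly : ∀ g : Lp ℝ 2 ν, φ g = ∫ x, (f0 x).toReal * g x ∂ν := by
    intro g
    rw [apply_eq_inner, hdens, inner_eq_integral]
    refine integral_congr_ae ?_
    filter_upwards [hfL_ae] with x hx
    rw [hx]
  refine ⟨φ, ?_, ?_⟩
  · intro g hg
    have hg' : 0 ≤ᵐ[ν] ⇑g := (Lp.coeFn_nonneg g).mpr hg
    have hgint : Integrable (⇑g) ν := (Lp.memLp g).integrable one_le_two
    have hint : Integrable (fun x ↦ (f0 x).toReal * g x) ν := by
      refine Integrable.bdd_mul (c := 1) hgint hfr_meas.aestronglyMeasurable ?_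
      filter_upwards [hle1] with x hx
      rw [Real.norm_eq_abs, abs_of_nonneg ENNReal.toReal_nonneg]
      exact htoReal_le x hx
    constructor
    · rw [happly]
      refine integral_nonneg_of_ae ?_
      filter_upwards [hg'] with x hx
      exact mul_nonneg ENNReal.toReal_nonneg hx
    · rw [happly]
      refine integral_mono_ae hint hgint ?_
      filter_upwards [hle1, hg'] with x hx hgx
      calc (f0 x).toReal * g x ≤ 1 * g x :=
            mul_le_mul_of_nonneg_right (htoReal_le x hx) hgx
      _ = g x := one_mul _
  · apply Subtype.ext
    show ν.withDensity (psiDens ν φ) = (μ : Measure S)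
    have hae : psiDens ν φ =ᵐ[ν] f0 := by
      have : psiDens ν φ = fun x ↦ min (ENNReal.ofReal (fL x)) 1 := by
        unfold psiDens
        rw [hdens]
      rw [this]
      filter_upwards [hle1, hfL_ae] with x hx hfx
      have hne : f0 x ≠ ⊤ := by
        intro h
        rw [h] at hx
        simp at hx
      rw [hfx, ENNReal.ofReal_toReal hne]
      exact min_eq_left hx
    rw [withDensity_congr_ae hae]
    exact Measure.withDensity_rnDeriv_eq _ _ hac

end CompactOrderIntervalAux

/-- The order interval `[0, ν]` of finite positive Borel measures below a finite
positive Borel measure `ν` on a Polish space is compact in the topology of weak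
convergence of measures. -/
theorem stmt_0 {S : Type*} [MetricSpace S] [PolishSpace S]
    [MeasurableSpace S] [BorelSpace S]
    (ν : Measure S) [IsFiniteMeasure ν] :
    IsCompact {μ : FiniteMeasure S | (μ : Measure S) ≤ ν} := by
  have himg : {μ : FiniteMeasure S | (μ : Measure S) ≤ ν}
      = CompactOrderIntervalAux.psi ν '' CompactOrderIntervalAux.Kset ν := by
    ext μ
    constructor
    · intro hμ
      obtain ⟨φ, hφ, hψ⟩ := CompactOrderIntervalAux.exists_psi_eq ν μ hμ
      exact ⟨φ, hφ, hψ⟩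
    · rintro ⟨φ, hφ, rfl⟩
      exact CompactOrderIntervalAux.psi_le ν φ
  rw [himg]
  exact (CompactOrderIntervalAux.isCompact_Kset ν).image_of_continuousOn
    (CompactOrderIntervalAux.continuousOn_psi ν)
end

section
/- Let ν be a Borel probability measure on [0,1], δ ≥ 0, and 0 < c ≤ 1 such that ν([0,c)) > δ. Then there exists c̄ in the support of ν with 0 ≤ c̄ < c, ν([c̄, c)) > 0, and ν([0, c̄]) > δ. -/
open MeasureTheory

/-- The topological support of a Borel measure: the set of points all of whose open
neighbourhoods have positive measure. -/
def msupport {X : Type*} [TopologicalSpace X] [MeasurableSpace X] (μ : Measure X) : Set X :=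
  {x | ∀ U : Set X, IsOpen U → x ∈ U → 0 < μ U}

lemma msupport_closed {X : Type*} [TopologicalSpace X] [MeasurableSpace X] (μ : Measure X) :
    IsClosed (msupport μ) := by
  refine isClosed_of_closure_subset fun x hx => ?_
  intro U hU hxU
  obtain ⟨s, hsU, hsS⟩ := mem_closure_iff.mp hx U hU hxU
  exact hsS U hU hsU

lemma exists_msupport {X : Type*} [TopologicalSpace X] [MeasurableSpace X]
    [SecondCountableTopology X] (μ : Measure X) {U : Set X} (hU : IsOpen U)
    (h : μ U ≠ 0) : ∃ x ∈ U, x ∈ msupport μ := by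
  obtain ⟨x, hxU, hx⟩ := exists_mem_forall_mem_nhdsWithin_pos_measure h
  refine ⟨x, hxU, fun V hV hxV => ?_⟩
  exact hx V (by rw [hU.nhdsWithin_eq hxU]; exact hV.mem_nhds hxV)

lemma null_of_disjoint_msupport {X : Type*} [TopologicalSpace X] [MeasurableSpace X]
    [SecondCountableTopology X] (μ : Measure X) {U : Set X} (hU : IsOpen U)
    (h : ∀ x ∈ U, x ∉ msupport μ) : μ U = 0 := by
  by_contra hne
  obtain ⟨x, hxU, hxS⟩ := exists_msupport μ hU hne
  exact h x hxU hxS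

lemma cdf_below (ν : Measure unitInterval) (δ : ℝ) (c : unitInterval) (hc : 0 < c)
    (h : ENNReal.ofReal δ < ν (Set.Iio c)) :
    ∃ x : unitInterval, x < c ∧ ENNReal.ofReal δ < ν (Set.Iic x) := by
  have hc' : (0:ℝ) < c.val := hc
  set x : ℕ → unitInterval := fun n => ⟨max 0 (c.val - 1/(n+1)), by
    constructor
    · exact le_max_left _ _
    · refine max_le (by norm_num) ?_
      have : (0:ℝ) ≤ 1/(n+1) := by positivity
      linarith [c.2.2]⟩ with hxdef
  have hxlt : ∀ n, x n < c := by
    intro n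
    rw [← Subtype.coe_lt_coe]
    refine max_lt hc' ?_
    have : (0:ℝ) < 1/(n+1) := by positivity
    simpa using this
  have hmono : Monotone fun n => Set.Iic (x n) := by
    intro a b hab
    apply Set.Iic_subset_Iic.mpr
    rw [← Subtype.coe_le_coe]
    refine max_le_max le_rfl ?_
    have hab' : (a:ℝ) ≤ b := Nat.cast_le.mpr hab
    have : (1:ℝ)/(b+1) ≤ 1/(a+1) := by
      apply one_div_le_one_div_of_le (by positivity)
      linarith
    linarith
  have hUnion : (⋃ n, Set.Iic (x n)) = Set.Iio c := by
    ext y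
    simp only [Set.mem_iUnion, Set.mem_Iic, Set.mem_Iio]
    constructor
    · rintro ⟨n, hn⟩; exact lt_of_le_of_lt hn (hxlt n)
    · intro hy
      obtain ⟨n, hn⟩ := exists_nat_one_div_lt (sub_pos.mpr (Subtype.coe_lt_coe.mpr hy))
      refine ⟨n, ?_⟩
      rw [← Subtype.coe_le_coe]
      refine le_trans (le_of_lt ?_) (le_max_right _ _)
      linarith
  rw [← hUnion, hmono.measure_iUnion, lt_iSup_iff] at h
  obtain ⟨n, hn⟩ := h
  exact ⟨x n, hxlt n, hn⟩

/-- If `ν` is a Borel probability measure on `[0,1]`, `δ ≥ 0` and `0 < c ≤ 1` with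
`ν([0,c)) > δ`, then there is `c̄ ∈ supp ν` with `c̄ < c`, `ν([c̄,c)) > 0` and
`ν([0,c̄]) > δ`. -/
theorem stmt_2 (ν : Measure unitInterval) [IsProbabilityMeasure ν]
    (δ : ℝ) (hδ : 0 ≤ δ) (c : unitInterval) (hc : 0 < c)
    (h : ENNReal.ofReal δ < ν (Set.Iio c)) :
    ∃ cbar : unitInterval, cbar ∈ msupport ν ∧ cbar < c ∧
      0 < ν (Set.Ico cbar c) ∧ ENNReal.ofReal δ < ν (Set.Iic cbar) := by
  set S := msupport ν with hSdef
  have hνIio : ν (Set.Iio c) ≠ 0 :=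
    (lt_of_le_of_lt (zero_le) h).ne'
  -- the set of support points below c, in ℝ
  set T : Set ℝ := Subtype.val '' (S ∩ Set.Iio c) with hTdef
  have hTne : T.Nonempty := by
    obtain ⟨s, hsIio, hsS⟩ := exists_msupport ν isOpen_Iio hνIio
    exact ⟨s.val, ⟨s, ⟨hsS, hsIio⟩, rfl⟩⟩
  have hTbdd : BddAbove T := by
    refine ⟨1, fun t ht => ?_⟩
    obtain ⟨s, _, rfl⟩ := ht
    exact s.2.2
  set m₀ : ℝ := sSup T with hm₀def
  have hm₀mem : m₀ ∈ Set.Icc (0:ℝ) 1 := by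
    constructor
    · obtain ⟨t, s, hs, rfl⟩ := id hTne
      exact le_trans s.2.1 (le_csSup hTbdd ⟨s, hs, rfl⟩)
    · exact csSup_le hTne fun t ⟨s', _, hs'⟩ => hs' ▸ s'.2.2
  set m : unitInterval := ⟨m₀, hm₀mem⟩ with hmdef
  have hmS : m ∈ S := by
    have h1 : m₀ ∈ closure T := csSup_mem_closure hTne hTbdd
    have h2 : m ∈ closure (S ∩ Set.Iio c) := closure_subtype.mpr h1
    exact (msupport_closed ν).closure_subset (closure_mono Set.inter_subset_left h2)
  have hmc : m ≤ c := by
    rw [← Subtype.coe_le_coe]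
    exact csSup_le hTne fun t ⟨s', hs', h⟩ => h ▸ le_of_lt hs'.2
  have hnull : ν (Set.Ioo m c) = 0 := by
    apply null_of_disjoint_msupport ν isOpen_Ioo
    intro y hy hyS
    have : y.val ≤ m₀ := le_csSup hTbdd ⟨y, ⟨hyS, hy.2⟩, rfl⟩
    exact absurd this (not_le.mpr hy.1)
  obtain ⟨x, hxc, hx⟩ := cdf_below ν δ c hc h
  rcases eq_or_lt_of_le hmc with hmc' | hmc'
  · -- Case B : m = c, support points accumulate at c
    have hmcc : m₀ = c.val := congrArg Subtype.val hmc'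
    have hx' : x.val < m₀ := hmcc ▸ (Subtype.coe_lt_coe.mpr hxc)
    obtain ⟨t, ⟨s, hs, rfl⟩, hst⟩ := exists_lt_of_lt_csSup hTne hx'
    have hs' : s.val < m₀ := hmcc ▸ (Subtype.coe_lt_coe.mpr hs.2)
    obtain ⟨t', ⟨s', hs'mem, rfl⟩, hst'⟩ := exists_lt_of_lt_csSup hTne hs'
    refine ⟨s, hs.1, hs.2, ?_, ?_⟩
    · refine lt_of_lt_of_le (hs'mem.1 (Set.Ioo s c) isOpen_Ioo ⟨hst', hs'mem.2⟩) ?_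
      exact measure_mono Set.Ioo_subset_Ico_self
    · exact lt_of_lt_of_le hx (measure_mono (Set.Iic_subset_Iic.mpr (le_of_lt hst)))
  · -- Case A : m < c
    have hIicm : ENNReal.ofReal δ < ν (Set.Iic m) := by
      refine lt_of_lt_of_le h ?_
      have hsub : Set.Iio c ⊆ Set.Iic m ∪ Set.Ioo m c := by
        intro y hy
        rcases le_or_gt y m with h' | h'
        · exact Or.inl h'
        · exact Or.inr ⟨h', hy⟩
      calc ν (Set.Iio c) ≤ ν (Set.Iic m ∪ Set.Ioo m c) := measure_mono hsub
        _ ≤ ν (Set.Iic m) + ν (Set.Ioo m c) := measure_union_le _ _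
        _ = ν (Set.Iic m) := by rw [hnull, add_zero]
    rcases eq_or_ne (ν {m}) 0 with hatom | hatom
    · -- no atom at m : use continuity from below at m
      have hIiom : ENNReal.ofReal δ < ν (Set.Iio m) := by
        refine lt_of_lt_of_le hIicm ?_
        calc ν (Set.Iic m) ≤ ν (Set.Iio m ∪ {m}) := measure_mono (by
              intro y hy; rcases eq_or_lt_of_le (Set.mem_Iic.mp hy) with h' | h'
              · exact Or.inr (by simp [h'])
              · exact Or.inl h')
          _ ≤ ν (Set.Iio m) + ν {m} := measure_union_le _ _
          _ = ν (Set.Iio m) := by rw [hatom, add_zero]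
      have hm0 : 0 < m := by
        by_contra hm0
        have hm00 : m = 0 := le_antisymm (not_lt.mp hm0) unitInterval.nonneg'
        rw [hm00] at hIiom
        have hemp : Set.Iio (0:unitInterval) = ∅ := by
          ext y; simp only [Set.mem_Iio, Set.mem_empty_iff_false, iff_false, not_lt]
          exact unitInterval.nonneg'
        rw [hemp, measure_empty] at hIiom
        exact absurd hIiom (not_lt.mpr (zero_le))
      obtain ⟨y, hym, hy⟩ := cdf_below ν δ m hm0 hIiom
      -- ν (Ioo y m) > 0
      have hIooyc : 0 < ν (Set.Ioo y c) := hmS (Set.Ioo y c) isOpen_Ioo ⟨hym, hmc'⟩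
      have hIooym : ν (Set.Ioo y m) ≠ 0 := by
        intro h0
        have : ν (Set.Ioo y c) = 0 := by
          have hsub : Set.Ioo y c ⊆ Set.Ioo y m ∪ ({m} ∪ Set.Ioo m c) := by
            intro z hz
            rcases lt_trichotomy z m with h' | h' | h'
            · exact Or.inl ⟨hz.1, h'⟩
            · exact Or.inr (Or.inl (by simp [h']))
            · exact Or.inr (Or.inr ⟨h', hz.2⟩)
          refine le_antisymm ?_ (zero_le)
          calc ν (Set.Ioo y c) ≤ ν (Set.Ioo y m) + (ν {m} + ν (Set.Ioo m c)) :=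
                le_trans (measure_mono hsub) (le_trans (measure_union_le _ _)
                  (by gcongr; exact measure_union_le _ _))
            _ = 0 := by rw [h0, hatom, hnull]; simp
        rw [this] at hIooyc; exact absurd hIooyc (lt_irrefl 0)
      obtain ⟨cbar, hcbarIoo, hcbarS⟩ := exists_msupport ν isOpen_Ioo hIooym
      refine ⟨cbar, hcbarS, lt_trans hcbarIoo.2 hmc', ?_, ?_⟩
      · refine lt_of_lt_of_le (hmS (Set.Ioo cbar c) isOpen_Ioo ⟨hcbarIoo.2, hmc'⟩) ?_
        exact measure_mono Set.Ioo_subset_Ico_self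
      · exact lt_of_lt_of_le hy (measure_mono (Set.Iic_subset_Iic.mpr (le_of_lt hcbarIoo.1)))
    · -- atom at m : take cbar = m
      refine ⟨m, hmS, hmc', ?_, hIicm⟩
      exact lt_of_lt_of_le (pos_iff_ne_zero.mpr hatom)
        (measure_mono (Set.singleton_subset_iff.mpr ⟨le_rfl, hmc'⟩))
end

section
/- (Mass ordering principle) Let ν₁, ν₂ be mutually singular Borel probability measures on [0,1]. Then there exist a, b ∈ [0,1] with a < b such that ν₁([a,b]) > 0 and ν₂([a,b]) > 0, and moreover either ν₁([0,b)) < ν₂([0,a]) or ν₂([0,b)) < ν₁([0,a]). -/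
open MeasureTheory Set Filter ENNReal

namespace MassOrderingAux

instance : Fact ((0:ℝ) ≤ 1) := ⟨zero_le_one⟩

local notation "I" => unitInterval

/-- Splitting `Iic q` as `Iio p ∪ Icc p q`. -/
lemma iio_add_icc (ν : Measure I) {p q : I} (hpq : p ≤ q) :
    ν (Iio p) + ν (Icc p q) = ν (Iic q) := by
  have hd : Disjoint (Iio p) (Icc p q) :=
    Set.disjoint_left.mpr (fun x hx hx2 => absurd hx2.1 (not_le.mpr hx))
  have h := measure_union (μ := ν) hd (measurableSet_Icc (a := p) (b := q))
  rw [Iio_union_Icc_eq_Iic hpq] at h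
  exact h.symm

/-- Splitting `Iio q` as `Iio p ∪ Ico p q`. -/
lemma iio_add_ico (ν : Measure I) {p q : I} (hpq : p ≤ q) :
    ν (Iio p) + ν (Ico p q) = ν (Iio q) := by
  have hd : Disjoint (Iio p) (Ico p q) :=
    Set.disjoint_left.mpr (fun x hx hx2 => absurd hx2.1 (not_le.mpr hx))
  have h := measure_union (μ := ν) hd (measurableSet_Ico (a := p) (b := q))
  rw [Iio_union_Ico_eq_Iio hpq] at h
  exact h.symm

lemma icc_pos (ν : Measure I) {p q : I} (hpq : p ≤ q) (h : ν (Iio p) < ν (Iic q)) :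
    0 < ν (Icc p q) := by
  rcases eq_or_ne (ν (Icc p q)) 0 with h0 | h0
  · have := iio_add_icc ν hpq
    rw [h0, add_zero] at this
    exact absurd this (ne_of_lt h)
  · exact pos_iff_ne_zero.mpr h0

lemma ico_pos (ν : Measure I) {p q : I} (hpq : p ≤ q) (h : ν (Iio p) < ν (Iio q)) :
    0 < ν (Ico p q) := by
  rcases eq_or_ne (ν (Ico p q)) 0 with h0 | h0
  · have := iio_add_ico ν hpq
    rw [h0, add_zero] at this
    exact absurd this (ne_of_lt h)
  · exact pos_iff_ne_zero.mpr h0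

/-- A bound on `ν (Iio p)` from bounds on `ν (Iic x)` for `x < p`. -/
lemma measure_iio_le {ν : Measure I} {p : I} {t : ℝ≥0∞}
    (h : ∀ x, x < p → ν (Iic x) ≤ t) : ν (Iio p) ≤ t := by
  by_cases hp : ∃ q, q < p
  · obtain ⟨q, hq⟩ := hp
    obtain ⟨u, hu, hmem, htend⟩ := exists_seq_strictMono_tendsto' hq
    have hU : Iio p = ⋃ n, Iic (u n) := by
      ext y
      simp only [mem_Iio, mem_iUnion, mem_Iic]
      constructor
      · intro hy
        obtain ⟨n, hn⟩ := (htend.eventually (eventually_gt_nhds hy)).exists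
        exact ⟨n, hn.le⟩
      · rintro ⟨n, hn⟩
        exact lt_of_le_of_lt hn (hmem n).2
    rw [hU, Monotone.measure_iUnion (fun m n hmn => Iic_subset_Iic.mpr (hu.monotone hmn))]
    exact iSup_le fun n => h _ (hmem n).2
  · push_neg at hp
    have : Iio p = ∅ := eq_empty_of_forall_notMem (fun y hy => absurd hy (not_lt.mpr (hp y)))
    simp [this]

/-- Right-continuity of `x ↦ ν (Iic x)` at the infimum of an upward-closed set. -/
lemma le_measure_iic_sInf {ν : Measure I} [IsProbabilityMeasure ν] {t : ℝ≥0∞} {S : Set I}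
    (hS : S.Nonempty) (hup : ∀ ⦃x y : I⦄, x ≤ y → x ∈ S → y ∈ S)
    (hmem : ∀ x ∈ S, t ≤ ν (Iic x)) : t ≤ ν (Iic (sInf S)) := by
  by_cases hpS : sInf S ∈ S
  · exact hmem _ hpS
  have hmem' : ∀ x : I, sInf S < x → x ∈ S := by
    intro x hx
    obtain ⟨s, hsS, hs⟩ := sInf_lt_iff.mp hx
    exact hup hs.le hsS
  obtain ⟨q, hq⟩ := hS
  have hpq : sInf S < q := lt_of_le_of_ne (sInf_le hq) (by rintro rfl; exact hpS hq)
  obtain ⟨u, hu, hmemu, htend⟩ := exists_seq_strictAnti_tendsto' hpq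
  have hI : Iic (sInf S) = ⋂ n, Iic (u n) := by
    ext y
    simp only [mem_Iic, mem_iInter]
    constructor
    · exact fun hy n => hy.trans (hmemu n).1.le
    · intro hy
      by_contra hyp
      rw [not_le] at hyp
      obtain ⟨n, hn⟩ := (htend.eventually (eventually_lt_nhds hyp)).exists
      exact absurd (hy n) (not_le.mpr hn)
  have htm := tendsto_measure_iInter_atTop (μ := ν) (s := fun n => Iic (u n))
    (fun n => measurableSet_Iic.nullMeasurableSet)
    (fun m n hmn => Iic_subset_Iic.mpr ((hu.antitone hmn)))
    ⟨0, measure_ne_top ν _⟩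
  rw [← hI] at htm
  exact ge_of_tendsto' htm (fun n => hmem _ (hmem' _ (hmemu n).1))

/-- Right approximation: if `ν (Iic p) < t` and `p < q`, there is `r ∈ (p, q)` with
`ν (Iio r) < t`. -/
lemma exists_iio_lt {ν : Measure I} [IsProbabilityMeasure ν] {p q : I} (hpq : p < q)
    {t : ℝ≥0∞} (h : ν (Iic p) < t) : ∃ r, p < r ∧ r < q ∧ ν (Iio r) < t := by
  obtain ⟨u, hu, hmemu, htend⟩ := exists_seq_strictAnti_tendsto' hpq
  have hI : Iic p = ⋂ n, Iio (u n) := by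
    ext y
    simp only [mem_Iic, mem_iInter, mem_Iio]
    constructor
    · exact fun hy n => lt_of_le_of_lt hy (hmemu n).1
    · intro hy
      by_contra hyp
      rw [not_le] at hyp
      obtain ⟨n, hn⟩ := (htend.eventually (eventually_lt_nhds hyp)).exists
      exact absurd (hy n) (not_lt.mpr hn.le)
  have htm := tendsto_measure_iInter_atTop (μ := ν) (s := fun n => Iio (u n))
    (fun n => measurableSet_Iio.nullMeasurableSet)
    (fun m n hmn => Iio_subset_Iio ((hu.antitone hmn)))
    ⟨0, measure_ne_top ν _⟩
  rw [← hI] at htm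
  obtain ⟨n, hn⟩ := (htm.eventually_lt_const h).exists
  exact ⟨u n, (hmemu n).1, (hmemu n).2, hn⟩

/-- If `ν (Ico p q) ≠ 0` then some closed interval `Icc p r` with `r < q` has positive mass. -/
lemma exists_icc_pos {ν : Measure I} {p q : I} (hpq : p < q) (h : ν (Ico p q) ≠ 0) :
    ∃ r, p < r ∧ r < q ∧ ν (Icc p r) ≠ 0 := by
  by_contra hc
  push_neg at hc
  obtain ⟨u, hu, hmemu, htend⟩ := exists_seq_strictMono_tendsto' hpq
  have hU : Ico p q = ⋃ n, Icc p (u n) := by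
    ext y
    simp only [mem_Ico, mem_iUnion, mem_Icc]
    constructor
    · rintro ⟨h1, h2⟩
      obtain ⟨n, hn⟩ := (htend.eventually (eventually_gt_nhds h2)).exists
      exact ⟨n, h1, hn.le⟩
    · rintro ⟨n, h1, h2⟩
      exact ⟨h1, lt_of_le_of_lt h2 (hmemu n).2⟩
  exact h (hU ▸ measure_iUnion_null (fun n => hc _ (hmemu n).1 (hmemu n).2))

/-- The infimum of the level set `{x | t ≤ ν (Iic x)}`, with its basic properties. -/
lemma exists_sInf_point (ν : Measure I) [IsProbabilityMeasure ν] {t : ℝ≥0∞} {w : I}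
    (hw : t ≤ ν (Iic w)) :
    ∃ p, p ≤ w ∧ t ≤ ν (Iic p) ∧ ∀ y, y < p → ν (Iic y) < t := by
  have hw' : w ∈ {x : I | t ≤ ν (Iic x)} := hw
  refine ⟨sInf {x : I | t ≤ ν (Iic x)}, sInf_le hw',
    le_measure_iic_sInf ⟨w, hw'⟩
      (fun u v huv hu => le_trans hu (measure_mono (Iic_subset_Iic.mpr huv)))
      (fun _ hx => hx),
    fun y hy => not_le.mp (fun hmem =>
      absurd (sInf_le (show y ∈ {x : I | t ≤ ν (Iic x)} from hmem)) (not_le.mpr hy))⟩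

/-- Branch A of the argument: the left limit at `b` is strictly below `t`. -/
lemma branchA (ν₁ ν₂ : Measure I) [IsProbabilityMeasure ν₁] [IsProbabilityMeasure ν₂]
    {c b : I} {t : ℝ≥0∞} (hcb : c < b) (htc : t ≤ ν₂ (Iic c)) (htb : t ≤ ν₁ (Iic b))
    (hlt : ∀ y, y < b → ν₁ (Iic y) < t) (hs : ν₁ (Iio b) < t) :
    ∃ a b' : I, a < b' ∧ 0 < ν₁ (Icc a b') ∧ 0 < ν₂ (Icc a b') ∧ ν₁ (Iio b') < ν₂ (Iic a) := by
  set s := ν₁ (Iio b) with hsdef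
  have hcS : c ∈ {x : I | s < ν₂ (Iic x)} := lt_of_lt_of_le hs htc
  have ha₀c : sInf {x : I | s < ν₂ (Iic x)} ≤ c := sInf_le hcS
  have ha₀b : sInf {x : I | s < ν₂ (Iic x)} < b := lt_of_le_of_lt ha₀c hcb
  have hFb2 : t ≤ ν₂ (Iic b) := htc.trans (measure_mono (Iic_subset_Iic.mpr hcb.le))
  obtain ⟨a', ha'b, ha'mem, ha'io⟩ : ∃ a', a' < b ∧ s < ν₂ (Iic a') ∧ ν₂ (Iio a') < t := by
    by_cases h0 : s < ν₂ (Iic (sInf {x : I | s < ν₂ (Iic x)}))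
    · refine ⟨_, ha₀b, h0, ?_⟩
      have hbd : ∀ x, x < sInf {x : I | s < ν₂ (Iic x)} → ν₂ (Iic x) ≤ s :=
        fun x hx => not_lt.mp (fun hgt => (not_le.mpr hx) (sInf_le hgt))
      exact lt_of_le_of_lt (measure_iio_le hbd) hs
    · push_neg at h0
      have h0' : ν₂ (Iic (sInf {x : I | s < ν₂ (Iic x)})) < t := lt_of_le_of_lt h0 hs
      obtain ⟨r, hr1, hr2, hr3⟩ := exists_iio_lt ha₀b h0'
      refine ⟨r, hr2, ?_, hr3⟩
      obtain ⟨x, hxS, hxr⟩ := sInf_lt_iff.mp hr1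
      exact lt_of_lt_of_le hxS (measure_mono (Iic_subset_Iic.mpr hxr.le))
  refine ⟨a', b, ha'b, ?_, ?_, ha'mem⟩
  · exact icc_pos ν₁ ha'b.le (lt_of_le_of_lt (measure_mono Iio_subset_Iic_self)
      (lt_of_lt_of_le (hlt a' ha'b) htb))
  · exact icc_pos ν₂ ha'b.le (lt_of_lt_of_le ha'io hFb2)

/-- Branch B of the argument: `ν₂ (Ico a₀ b)` is positive. -/
lemma branchB (ν₁ ν₂ : Measure I) [IsProbabilityMeasure ν₁] [IsProbabilityMeasure ν₂]
    {a₀ b : I} {t : ℝ≥0∞} (hab : a₀ < b) (ht2 : t ≤ ν₂ (Iic a₀))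
    (hlt : ∀ y, y < b → ν₁ (Iic y) < t) (hb : t ≤ ν₁ (Iio b)) (hIco : ν₂ (Ico a₀ b) ≠ 0) :
    ∃ a b' : I, a < b' ∧ 0 < ν₁ (Icc a b') ∧ 0 < ν₂ (Icc a b') ∧ ν₁ (Iio b') < ν₂ (Iic a) := by
  have h1 : ν₁ (Iio a₀) < ν₁ (Iio b) :=
    lt_of_le_of_lt (measure_mono Iio_subset_Iic_self) (lt_of_lt_of_le (hlt a₀ hab) hb)
  have hIco1 : ν₁ (Ico a₀ b) ≠ 0 := (ico_pos ν₁ hab.le h1).ne'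
  obtain ⟨r₁, hr₁a, hr₁b, hr₁⟩ := exists_icc_pos hab hIco1
  obtain ⟨r₂, hr₂a, hr₂b, hr₂⟩ := exists_icc_pos hab hIco
  have hmb : max r₁ r₂ < b := max_lt hr₁b hr₂b
  refine ⟨a₀, max r₁ r₂, lt_max_iff.mpr (Or.inl hr₁a), ?_, ?_, ?_⟩
  · exact lt_of_lt_of_le (pos_iff_ne_zero.mpr hr₁)
      (measure_mono (Icc_subset_Icc_right (le_max_left _ _)))
  · exact lt_of_lt_of_le (pos_iff_ne_zero.mpr hr₂)
      (measure_mono (Icc_subset_Icc_right (le_max_right _ _)))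
  · exact lt_of_le_of_lt (measure_mono Iio_subset_Iic_self)
      (lt_of_lt_of_le (hlt _ hmb) ht2)

/-- Main lemma: if `ν₁ (Iic c) < ν₂ (Iic c)` for some `c`, then the conclusion holds with
the first disjunct. -/
lemma main (ν₁ ν₂ : Measure I) [IsProbabilityMeasure ν₁] [IsProbabilityMeasure ν₂]
    {c : I} (hc : ν₁ (Iic c) < ν₂ (Iic c)) :
    ∃ a b : I, a < b ∧ 0 < ν₁ (Icc a b) ∧ 0 < ν₂ (Icc a b) ∧ ν₁ (Iio b) < ν₂ (Iic a) := by
  set t := ν₂ (Iic c) with htdef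
  -- the point b
  have hone : t ≤ ν₁ (Iic 1) := by
    have huniv : (Iic (1:I)) = univ := eq_univ_of_forall (fun x => unitInterval.le_one')
    rw [huniv, measure_univ]
    exact prob_le_one
  obtain ⟨b, -, hFb, hlt₁⟩ := exists_sInf_point ν₁ hone
  have hcb : c < b := by
    by_contra hle
    rw [not_lt] at hle
    exact absurd (hFb.trans (measure_mono (Iic_subset_Iic.mpr hle))) (not_le.mpr hc)
  by_cases hA : ν₁ (Iio b) < t
  · exact branchA ν₁ ν₂ hcb le_rfl hFb hlt₁ hA
  push_neg at hA
  -- the point a₀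
  obtain ⟨a₀, ha₀c, hFa₀, hlt₂⟩ := exists_sInf_point ν₂ (le_refl t)
  have ha₀b : a₀ < b := lt_of_le_of_lt ha₀c hcb
  by_cases hBα : ν₂ (Ico a₀ b) ≠ 0
  · exact branchB ν₁ ν₂ ha₀b hFa₀ hlt₁ hA hBα
  rw [not_not] at hBα
  have hIob : t ≤ ν₂ (Iio a₀) := by
    have h1 : ν₂ (Iio a₀) + ν₂ (Ico a₀ b) = ν₂ (Iio b) := iio_add_ico ν₂ ha₀b.le
    rw [hBα, add_zero] at h1
    exact le_trans (hFa₀.trans (measure_mono (Iic_subset_Iio.mpr ha₀b))) h1.ge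
  have hFa₀1 : ν₁ (Iic a₀) < t := hlt₁ a₀ ha₀b
  -- a point x < a₀ with ν₁ (Iic a₀) < ν₂ (Iic x)
  obtain ⟨x, hxa₀, hx⟩ : ∃ x, x < a₀ ∧ ν₁ (Iic a₀) < ν₂ (Iic x) := by
    by_contra hcon
    push_neg at hcon
    exact absurd (hIob.trans (measure_iio_le hcon)) (not_le.mpr hFa₀1)
  set t₁ := ν₂ (Iic x) with ht₁def
  have ht₁t : t₁ < t := hlt₂ x hxa₀
  -- the point b₁
  have hbmem : t₁ ≤ ν₁ (Iic b) := ht₁t.le.trans hFb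
  obtain ⟨b₁, -, hFb₁, hlt₁'⟩ := exists_sInf_point ν₁ hbmem
  have ha₀b₁ : a₀ < b₁ := by
    by_contra hle
    rw [not_lt] at hle
    exact absurd (hFb₁.trans (measure_mono (Iic_subset_Iic.mpr hle))) (not_le.mpr hx)
  have hxb₁ : x < b₁ := lt_trans hxa₀ ha₀b₁
  by_cases hA₁ : ν₁ (Iio b₁) < t₁
  · exact branchA ν₁ ν₂ hxb₁ le_rfl hFb₁ hlt₁' hA₁
  push_neg at hA₁
  -- the point a₁
  obtain ⟨a₁, ha₁x, hFa₁, hlt₂'⟩ := exists_sInf_point ν₂ (le_refl t₁)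
  have ha₁b₁ : a₁ < b₁ := lt_of_le_of_lt ha₁x hxb₁
  have hpos : ν₂ (Iio a₁) < ν₂ (Iio b₁) := by
    have h1 : ν₂ (Iio a₁) ≤ t₁ := measure_iio_le (fun y hy => (hlt₂' y hy).le)
    have h2 : t ≤ ν₂ (Iio b₁) := hFa₀.trans (measure_mono (Iic_subset_Iio.mpr ha₀b₁))
    exact lt_of_le_of_lt h1 (lt_of_lt_of_le ht₁t h2)
  exact branchB ν₁ ν₂ ha₁b₁ hFa₁ hlt₁' hA₁ (ico_pos ν₂ ha₁b₁.le hpos).ne'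

end MassOrderingAux

open MassOrderingAux in
/-- **Mass ordering principle.** If `ν₁, ν₂` are mutually singular Borel probability
measures on `[0,1]`, then there are `a < b` in `[0,1]` with `ν₁([a,b]) > 0`,
`ν₂([a,b]) > 0`, and either `ν₁([0,b)) < ν₂([0,a])` or `ν₂([0,b)) < ν₁([0,a])`. -/
theorem stmt_4 (ν₁ ν₂ : Measure unitInterval)
    [IsProbabilityMeasure ν₁] [IsProbabilityMeasure ν₂]
    (hsing : ν₁ ⟂ₘ ν₂) :
    ∃ a b : unitInterval, a < b ∧
      0 < ν₁ (Set.Icc a b) ∧ 0 < ν₂ (Set.Icc a b) ∧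
      (ν₁ (Set.Iio b) < ν₂ (Set.Iic a) ∨ ν₂ (Set.Iio b) < ν₁ (Set.Iic a)) := by
  have hdichot : ∃ c : unitInterval, ν₁ (Set.Iic c) ≠ ν₂ (Set.Iic c) := by
    by_contra hcon
    push_neg at hcon
    have h12 : ν₁ = ν₂ := Measure.ext_of_Iic ν₁ ν₂ hcon
    obtain ⟨s, hsm, hs1, hs2⟩ := hsing
    have hle : ν₂ Set.univ ≤ ν₂ s + ν₂ sᶜ := by
      rw [← Set.union_compl_self s]
      exact measure_union_le s sᶜ
    rw [measure_univ, hs2, add_zero, ← h12, hs1] at hle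
    exact one_ne_zero (le_antisymm hle zero_le)
  obtain ⟨c, hcne⟩ := hdichot
  rcases lt_or_gt_of_ne hcne with h | h
  · obtain ⟨a, b, hab, h1, h2, h3⟩ := main ν₁ ν₂ h
    exact ⟨a, b, hab, h1, h2, Or.inl h3⟩
  · obtain ⟨a, b, hab, h2, h1, h3⟩ := main ν₂ ν₁ h
    exact ⟨a, b, hab, h1, h2, Or.inr h3⟩
end

section
/- Let μ be a Borel probability measure on C([0,1]) with support Γ, and let ν be a μ-invariant Borel probability measure on [0,1]. If for every x ∈ (0,1] there exists g ∈ Γ with g(x) < x, then 0 belongs to the support of ν. -/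
open MeasureTheory

lemma msupport_compl_null {X : Type*} [TopologicalSpace X] [MeasurableSpace X]
    [SecondCountableTopology X] (ν : Measure X) : ν (msupport ν)ᶜ = 0 := by
  apply measure_null_of_locally_null
  intro x hx
  simp only [msupport, Set.mem_compl_iff, Set.mem_setOf_eq, not_forall] at hx
  obtain ⟨U, hUo, hxU, hU0⟩ := hx
  refine ⟨U, mem_nhdsWithin_of_mem_nhds (hUo.mem_nhds hxU), ?_⟩
  simpa using hU0

/-- Let `μ` be a Borel probability measure on `C([0,1])` with support `Γ` and let `ν`
be a `μ`-invariant Borel probability measure on `[0,1]`. If for every `x ∈ (0,1]` there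
is `g ∈ Γ` with `g(x) < x`, then `0 ∈ supp ν`. -/
theorem stmt_5 {mC : MeasurableSpace C(unitInterval, unitInterval)}
    [BorelSpace C(unitInterval, unitInterval)]
    (μ : Measure C(unitInterval, unitInterval)) [IsProbabilityMeasure μ]
    (ν : Measure unitInterval) [IsProbabilityMeasure ν]
    (hinv : ∀ A : Set unitInterval, MeasurableSet A →
      ν A = ∫⁻ g, ν ((g : unitInterval → unitInterval) ⁻¹' A) ∂μ)
    (hdec : ∀ x : unitInterval, 0 < x →
      ∃ g ∈ msupport μ, (g : unitInterval → unitInterval) x < x) :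
    (0 : unitInterval) ∈ msupport ν := by
  by_contra h0
  set S := msupport ν with hS
  have hScompl : ν Sᶜ = 0 := msupport_compl_null ν
  -- S is nonempty
  have hSne : S.Nonempty := by
    by_contra hne
    rw [Set.not_nonempty_iff_eq_empty] at hne
    have h1 : ν (Set.univ : Set unitInterval) = 0 := by
      have := hScompl
      rwa [hne, Set.compl_empty] at this
    simp [measure_univ] at h1
  -- S is closed
  have hSclosed : IsClosed S := by
    rw [← isOpen_compl_iff, isOpen_iff_mem_nhds]
    intro x hx
    simp only [hS, msupport, Set.mem_compl_iff, Set.mem_setOf_eq, not_forall] at hx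
    obtain ⟨U, hUo, hxU, hU0⟩ := hx
    refine Filter.mem_of_superset (hUo.mem_nhds hxU) (fun y hy => ?_)
    simp only [hS, msupport, Set.mem_compl_iff, Set.mem_setOf_eq, not_forall]
    exact ⟨U, hUo, hy, hU0⟩
  -- least element of S
  have hScomp : IsCompact ((Subtype.val : unitInterval → ℝ) '' S) :=
    (hSclosed.isCompact).image continuous_subtype_val
  have himne : ((Subtype.val : unitInterval → ℝ) '' S).Nonempty := hSne.image _
  have hmem := hScomp.sInf_mem himne
  obtain ⟨m, hmS, hmt⟩ := hmem
  have hleast : ∀ x ∈ S, m ≤ x := by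
    intro x hx
    have : (m : ℝ) ≤ (x : ℝ) := by
      rw [hmt]; exact csInf_le hScomp.bddBelow (Set.mem_image_of_mem _ hx)
    exact_mod_cast this
  -- m > 0
  have hmpos : 0 < m := by
    have h0le : (0:ℝ) ≤ (m:ℝ) := m.2.1
    rcases h0le.lt_or_eq with h | h
    · exact_mod_cast h
    · exfalso
      apply h0
      have hm0 : m = 0 := Subtype.ext h.symm
      rwa [hm0] at hmS
  obtain ⟨g₀, hg₀Γ, hg₀m⟩ := hdec m hmpos
  -- pick c strictly between g₀ m and m
  set c : ℝ := ((g₀ m : ℝ) + (m : ℝ)) / 2 with hc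
  have hg₀mR : (g₀ m : ℝ) < (m : ℝ) := hg₀m
  have hc1 : (g₀ m : ℝ) < c := by rw [hc]; linarith
  have hc2 : c < (m : ℝ) := by rw [hc]; linarith
  -- continuity of g₀ at m
  have hcont : ContinuousAt (⇑g₀) m := g₀.continuous.continuousAt
  rw [Metric.continuousAt_iff] at hcont
  obtain ⟨δ, hδpos, hδ⟩ := hcont (c - (g₀ m : ℝ)) (by linarith)
  set W := Metric.ball m δ with hW
  have hνW : 0 < ν W := hmS W Metric.isOpen_ball (Metric.mem_ball_self hδpos)
  -- on W, g₀ < c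
  have hWc : ∀ x ∈ W, (g₀ x : ℝ) < c := by
    intro x hx
    have := hδ (Metric.mem_ball.mp hx)
    have h2 : (g₀ x : ℝ) - (g₀ m : ℝ) < c - (g₀ m : ℝ) := by
      calc (g₀ x : ℝ) - (g₀ m : ℝ) ≤ |(g₀ x : ℝ) - (g₀ m : ℝ)| := le_abs_self _
        _ < c - (g₀ m : ℝ) := by
            rwa [Subtype.dist_eq, Real.dist_eq] at this
    linarith
  -- ball of maps
  set r : ℝ := (m : ℝ) - c with hr
  have hrpos : 0 < r := by rw [hr]; linarith
  set V := Metric.ball g₀ r with hV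
  have hμV : 0 < μ V := hg₀Γ V Metric.isOpen_ball (Metric.mem_ball_self hrpos)
  -- for g in V and x in W, g x < m
  have hkey : ∀ g ∈ V, ∀ x ∈ W, (g : C(unitInterval, unitInterval)) x < m := by
    intro g hg x hx
    have h1 : dist (g x) (g₀ x) ≤ dist g g₀ := ContinuousMap.dist_apply_le_dist x
    have h2 : dist g g₀ < r := Metric.mem_ball.mp hg
    have h3 : (g x : ℝ) - (g₀ x : ℝ) ≤ dist (g x) (g₀ x) := by
      rw [Subtype.dist_eq, Real.dist_eq]; exact le_abs_self _
    have h4 : (g₀ x : ℝ) < c := hWc x hx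
    have : (g x : ℝ) < (m : ℝ) := by
      have := h3.trans (h1.trans h2.le)
      rw [hr] at this
      linarith
    exact_mod_cast this
  -- the set A = [0, m)
  set A : Set unitInterval := Set.Iio m with hA
  have hAmeas : MeasurableSet A := by
    have : A = (Subtype.val : unitInterval → ℝ) ⁻¹' Set.Iio (m : ℝ) := by
      ext x
      simp [hA, Subtype.coe_lt_coe]
    rw [this]
    exact measurable_subtype_coe measurableSet_Iio
  have hνA : ν A = 0 := by
    apply measure_mono_null _ hScompl
    intro x hx
    simp only [Set.mem_compl_iff]
    intro hxS
    exact absurd (hleast x hxS) (not_le.mpr hx)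
  have hlow : ν W * μ V ≤ ∫⁻ g, ν ((g : unitInterval → unitInterval) ⁻¹' A) ∂μ := by
    have hVmeas : MeasurableSet V := Metric.isOpen_ball.measurableSet
    calc ν W * μ V = ∫⁻ g, V.indicator (fun _ => ν W) g ∂μ := by
          rw [lintegral_indicator_const hVmeas]
      _ ≤ ∫⁻ g, ν ((g : unitInterval → unitInterval) ⁻¹' A) ∂μ := by
          apply lintegral_mono
          intro g
          by_cases hg : g ∈ V
          · rw [Set.indicator_of_mem hg]
            apply measure_mono
            intro x hx
            exact hkey g hg x hx
          · rw [Set.indicator_of_notMem hg]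
            exact zero_le
  rw [← hinv A hAmeas, hνA] at hlow
  have : (0 : ENNReal) < ν W * μ V := ENNReal.mul_pos hνW.ne' hμV.ne'
  exact absurd (le_antisymm hlow zero_le) this.ne'
end

section
/- Let μ be a Borel probability measure on C([0,1]) with support Γ, and let ν be a μ-invariant Borel probability measure on [0,1]. If for every x ∈ [0,1) there exists g ∈ Γ with g(x) > x, then 1 belongs to the support of ν. -/
open MeasureTheory

/-- Let `μ` be a Borel probability measure on `C([0,1])` with support `Γ` and let `ν`
be a `μ`-invariant Borel probability measure on `[0,1]`. If for every `x ∈ [0,1)` there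
is `g ∈ Γ` with `g(x) > x`, then `1 ∈ supp ν`. -/
theorem stmt_6 {mC : MeasurableSpace C(unitInterval, unitInterval)}
    [BorelSpace C(unitInterval, unitInterval)]
    (μ : Measure C(unitInterval, unitInterval)) [IsProbabilityMeasure μ]
    (ν : Measure unitInterval) [IsProbabilityMeasure ν]
    (hinv : ∀ A : Set unitInterval, MeasurableSet A →
      ν A = ∫⁻ g, ν ((g : unitInterval → unitInterval) ⁻¹' A) ∂μ)
    (hdec : ∀ x : unitInterval, x < 1 →
      ∃ g ∈ msupport μ, x < (g : unitInterval → unitInterval) x) :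
    (1 : unitInterval) ∈ msupport ν := by
  by_contra h1
  set S : Set unitInterval := msupport ν with hS
  -- points outside S have an open null neighborhood
  have hout : ∀ x : unitInterval, x ∉ S → ∃ U : Set unitInterval, IsOpen U ∧ x ∈ U ∧ ν U = 0 := by
    intro x hx
    simp only [hS, msupport, Set.mem_setOf_eq, not_forall] at hx
    obtain ⟨U, hUo, hxU, hU0⟩ := hx
    exact ⟨U, hUo, hxU, by simpa using hU0⟩
  -- S is nonempty
  have hSne : S.Nonempty := by
    by_contra hne
    rw [Set.not_nonempty_iff_eq_empty] at hne
    have : ν (Set.univ : Set unitInterval) = 0 := by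
      apply measure_null_of_locally_null
      intro x _
      obtain ⟨U, hUo, hxU, hU0⟩ := hout x (by simp [hne])
      exact ⟨U, mem_nhdsWithin_of_mem_nhds (hUo.mem_nhds hxU), hU0⟩
    simp [measure_univ] at this
  -- S is closed
  have hScl : IsClosed S := by
    rw [← isOpen_compl_iff]
    rw [isOpen_iff_mem_nhds]
    intro x hx
    obtain ⟨U, hUo, hxU, hU0⟩ := hout x hx
    filter_upwards [hUo.mem_nhds hxU] with y hyU
    intro hyS
    exact absurd hU0 (hyS U hUo hyU).ne'
  -- greatest element of S
  obtain ⟨m, hmS, hmub⟩ := (hScl.isCompact).exists_isGreatest hSne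
  have hm1 : m < 1 := lt_of_le_of_ne m.2.2 (fun h => h1 (h ▸ hmS))
  obtain ⟨g, hgΓ, hgm⟩ := hdec m hm1
  -- ν (Ioi m) = 0
  have hIoi : ν (Set.Ioi m) = 0 := by
    apply measure_null_of_locally_null
    intro x hx
    have hxS : x ∉ S := fun h => absurd (hmub h) (not_le.mpr hx)
    obtain ⟨U, hUo, hxU, hU0⟩ := hout x hxS
    exact ⟨U, mem_nhdsWithin_of_mem_nhds (hUo.mem_nhds hxU), hU0⟩
  -- set up ε and continuity
  set ε : ℝ := ((g m : ℝ) - (m : ℝ)) / 2 with hε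
  have hεpos : 0 < ε := by
    have : (m : ℝ) < (g m : ℝ) := hgm
    simp only [hε]; linarith
  obtain ⟨δ, hδpos, hδ⟩ := Metric.continuousAt_iff.mp (g.continuous.continuousAt (x := m)) ε hεpos
  set W : Set unitInterval := Metric.ball m δ with hW
  set V : Set C(unitInterval, unitInterval) := Metric.ball g ε with hV
  -- key pointwise estimate
  have hkey : ∀ h ∈ V, ∀ x ∈ W, m < h x := by
    intro h hh x hx
    have h1 : dist (g x) (g m) < ε := hδ (by simpa [hW] using hx)
    have h2 : dist (h x) (g x) ≤ dist h g := ContinuousMap.dist_apply_le_dist x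
    have h3 : dist h g < ε := by simpa [hV] using hh
    rw [Subtype.dist_eq, Real.dist_eq] at h1
    rw [Subtype.dist_eq, Real.dist_eq] at h2
    have hgm' : (m : ℝ) + 2 * ε = (g m : ℝ) := by simp [hε]; ring
    have e1 : (g x : ℝ) > (g m : ℝ) - ε := by
      cases abs_lt.mp h1 with | intro a b => linarith
    have e2 : (h x : ℝ) > (g x : ℝ) - ε := by
      have := abs_lt.mp (lt_of_le_of_lt h2 h3)
      linarith [this.1]
    show (m : ℝ) < (h x : ℝ)
    linarith
  have hWpos : 0 < ν W := hmS W Metric.isOpen_ball (Metric.mem_ball_self hδpos)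
  have hVpos : 0 < μ V := hgΓ V Metric.isOpen_ball (Metric.mem_ball_self hεpos)
  -- contradiction via invariance
  have hzero : (0 : ENNReal) = ∫⁻ h, ν ((h : unitInterval → unitInterval) ⁻¹' (Set.Ioi m)) ∂μ := by
    rw [← hIoi]; exact hinv _ measurableSet_Ioi
  have hlb : ν W * μ V ≤ ∫⁻ h, ν ((h : unitInterval → unitInterval) ⁻¹' (Set.Ioi m)) ∂μ := by
    rw [← lintegral_indicator_const (Metric.isOpen_ball.measurableSet) (ν W)]
    apply lintegral_mono
    intro h
    by_cases hh : h ∈ V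
    · simp only [Set.indicator_of_mem (show h ∈ Metric.ball g ε from hh)]
      apply measure_mono
      intro x hx
      exact hkey h hh x hx
    · simp [Set.indicator_of_notMem (show h ∉ Metric.ball g ε from hh)]
  rw [← hzero] at hlb
  exact absurd (le_antisymm hlb zero_le) (ENNReal.mul_pos hWpos.ne' hVpos.ne').ne'
end

section
/- Let ν₁, ν₂ be two distinct Borel probability measures on [0,1], each concentrated on (0,1), and suppose some point z ∈ {0,1} lies in supp(ν₁) ∩ supp(ν₂). Then there exist sequences (z̃ₙ) and (ẑₙ) in [0,1] such that the open intervals Zₙ with endpoints z̃ₙ and ẑₙ are pairwise disjoint and satisfy ν₁(Zₙ) > 0 and ν₂(Zₙ) > 0 for every n ≥ 1. -/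
open MeasureTheory Set

lemma null_of_not_mem (ν : Measure unitInterval) [IsProbabilityMeasure ν]
    (hconc : ν (Ioo (0:unitInterval) 1) = 1) (x : unitInterval)
    (hx : x ∉ Ioo (0:unitInterval) 1) : ν {x} = 0 := by
  have h := measure_compl (μ := ν) (measurableSet_Ioo (a := (0:unitInterval)) (b := 1)) (measure_ne_top _ _)
  rw [hconc, measure_univ, tsub_self] at h
  have h2 : ν {x} ≤ ν ((Ioo (0:unitInterval) 1)ᶜ) :=
    measure_mono (by simpa using hx)
  simpa [h] using h2

/-- positivity near 0 -/
lemma pos_Ioo_zero (ν : Measure unitInterval) [IsProbabilityMeasure ν]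
    (hconc : ν (Ioo (0:unitInterval) 1) = 1) (hs : (0:unitInterval) ∈ msupport ν)
    (a : unitInterval) (ha : 0 < a) : 0 < ν (Ioo 0 a) := by
  have h1 : 0 < ν (Iio a) := hs _ isOpen_Iio ha
  have hsub : Iio a ⊆ {0} ∪ Ioo 0 a := by
    intro x hx
    rcases eq_or_lt_of_le (show (0:unitInterval) ≤ x from x.2.1) with h | h
    · exact Or.inl (by simp [← h])
    · exact Or.inr ⟨h, hx⟩
  have := (measure_mono hsub).trans (measure_union_le (μ := ν) _ _)
  rw [show ν {(0:unitInterval)} = 0 from null_of_not_mem ν hconc 0 (by simp), zero_add] at this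
  exact lt_of_lt_of_le h1 this

lemma pos_Ioo_one (ν : Measure unitInterval) [IsProbabilityMeasure ν]
    (hconc : ν (Ioo (0:unitInterval) 1) = 1) (hs : (1:unitInterval) ∈ msupport ν)
    (a : unitInterval) (ha : a < 1) : 0 < ν (Ioo a 1) := by
  have h1 : 0 < ν (Ioi a) := hs _ isOpen_Ioi ha
  have hsub : Ioi a ⊆ {1} ∪ Ioo a 1 := by
    intro x hx
    rcases eq_or_lt_of_le (show x ≤ (1:unitInterval) from x.2.2) with h | h
    · exact Or.inl (by simp [h])
    · exact Or.inr ⟨hx, h⟩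
  have := (measure_mono hsub).trans (measure_union_le (μ := ν) _ _)
  rw [show ν {(1:unitInterval)} = 0 from null_of_not_mem ν hconc 1 (by simp), zero_add] at this
  exact lt_of_lt_of_le h1 this

lemma exists_step0 (ν₁ ν₂ : Measure unitInterval)
    [IsProbabilityMeasure ν₁] [IsProbabilityMeasure ν₂]
    (hc₁ : ν₁ (Ioo (0:unitInterval) 1) = 1) (hc₂ : ν₂ (Ioo (0:unitInterval) 1) = 1)
    (hs₁ : (0:unitInterval) ∈ msupport ν₁) (hs₂ : (0:unitInterval) ∈ msupport ν₂)
    (a : unitInterval) (ha : 0 < a) :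
    ∃ b, 0 < b ∧ b < a ∧ 0 < ν₁ (Ioo b a) ∧ 0 < ν₂ (Ioo b a) := by
  have ha' : (0:ℝ) < a.1 := ha
  set r : ℕ → unitInterval := fun n =>
    ⟨a.1 / (n + 2), div_nonneg a.2.1 (by positivity),
      le_trans (div_le_self a.2.1 (by have := (Nat.cast_nonneg n : (0:ℝ) ≤ n); linarith)) a.2.2⟩ with hr
  have hrlt : ∀ n, r n < a := fun n =>
    Subtype.coe_lt_coe.mp (div_lt_self ha' (by have := (Nat.cast_nonneg n : (0:ℝ) ≤ n); linarith))
  have hrpos : ∀ n, 0 < r n := fun n =>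
    Subtype.coe_lt_coe.mp (by positivity)
  have cover : Ioo (0:unitInterval) a ⊆ ⋃ n, Ioo (r n) a := by
    intro x hx
    have hx0 : (0:ℝ) < x.1 := hx.1
    obtain ⟨n, hn⟩ := exists_nat_gt (a.1 / x.1)
    refine mem_iUnion.mpr ⟨n, ?_, hx.2⟩
    show r n < x
    refine Subtype.coe_lt_coe.mp ?_
    show a.1 / (n + 2) < x.1
    rw [div_lt_iff₀ (by positivity)]
    have h2 : a.1 / x.1 < (n : ℝ) + 2 := hn.trans_le (by norm_num)
    have := (div_lt_iff₀ hx0).mp h2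
    linarith
  have H : ∀ (ν : Measure unitInterval), 0 < ν (Ioo 0 a) → ∃ n, 0 < ν (Ioo (r n) a) := by
    intro ν hpos
    by_contra h
    push_neg at h
    have h0 : ν (⋃ n, Ioo (r n) a) = 0 :=
      measure_iUnion_null fun n => le_antisymm (h n) zero_le
    exact (hpos.trans_le ((measure_mono cover).trans h0.le)).false
  obtain ⟨n₁, h1⟩ := H ν₁ (pos_Ioo_zero ν₁ hc₁ hs₁ a ha)
  obtain ⟨n₂, h2⟩ := H ν₂ (pos_Ioo_zero ν₂ hc₂ hs₂ a ha)
  have hmono : ∀ m n : ℕ, m ≤ n → r n ≤ r m := by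
    intro m n hmn
    refine Subtype.coe_le_coe.mp ?_
    show a.1 / (n + 2) ≤ a.1 / (m + 2)
    have : (m:ℝ) + 2 ≤ n + 2 := by exact_mod_cast by linarith [hmn]
    gcongr
  refine ⟨r (max n₁ n₂), hrpos _, hrlt _, ?_, ?_⟩
  · exact h1.trans_le (measure_mono (Ioo_subset_Ioo_left (hmono _ _ (le_max_left _ _))))
  · exact h2.trans_le (measure_mono (Ioo_subset_Ioo_left (hmono _ _ (le_max_right _ _))))

lemma exists_step1 (ν₁ ν₂ : Measure unitInterval)
    [IsProbabilityMeasure ν₁] [IsProbabilityMeasure ν₂]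
    (hc₁ : ν₁ (Ioo (0:unitInterval) 1) = 1) (hc₂ : ν₂ (Ioo (0:unitInterval) 1) = 1)
    (hs₁ : (1:unitInterval) ∈ msupport ν₁) (hs₂ : (1:unitInterval) ∈ msupport ν₂)
    (a : unitInterval) (ha : a < 1) :
    ∃ b, a < b ∧ b < 1 ∧ 0 < ν₁ (Ioo a b) ∧ 0 < ν₂ (Ioo a b) := by
  have ha' : a.1 < 1 := ha
  have ha2 : (0:ℝ) < 1 - a.1 := by linarith
  set r : ℕ → unitInterval := fun n =>
    ⟨1 - (1 - a.1) / (n + 2),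
      by nlinarith [div_le_self ha2.le (show (1:ℝ) ≤ n + 2 by have := (Nat.cast_nonneg n : (0:ℝ) ≤ n); linarith), a.2.1],
      by nlinarith [div_nonneg ha2.le (show (0:ℝ) ≤ n + 2 by positivity)]⟩ with hr
  have hrlt : ∀ n, a < r n := by
    intro n
    refine Subtype.coe_lt_coe.mp ?_
    show a.1 < 1 - (1 - a.1) / (n + 2)
    have := div_lt_self ha2 (show (1:ℝ) < n + 2 by have := (Nat.cast_nonneg n : (0:ℝ) ≤ n); linarith)
    linarith
  have hrlt1 : ∀ n, r n < 1 := by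
    intro n
    refine Subtype.coe_lt_coe.mp ?_
    show 1 - (1 - a.1) / (n + 2) < 1
    have : (0:ℝ) < (1 - a.1) / (n + 2) := by positivity
    linarith
  have cover : Ioo a (1:unitInterval) ⊆ ⋃ n, Ioo a (r n) := by
    intro x hx
    have hx1 : x.1 < 1 := hx.2
    have hx1' : (0:ℝ) < 1 - x.1 := by linarith
    obtain ⟨n, hn⟩ := exists_nat_gt ((1 - a.1) / (1 - x.1))
    refine mem_iUnion.mpr ⟨n, hx.1, ?_⟩
    show x < r n
    refine Subtype.coe_lt_coe.mp ?_
    show x.1 < 1 - (1 - a.1) / (n + 2)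
    have h2 : (1 - a.1) / (1 - x.1) < (n : ℝ) + 2 := hn.trans_le (by norm_num)
    have := (div_lt_iff₀ hx1').mp h2
    have h3 : (1 - a.1) / (n + 2) < 1 - x.1 := by
      rw [div_lt_iff₀ (by positivity)]
      linarith
    linarith
  have H : ∀ (ν : Measure unitInterval), 0 < ν (Ioo a 1) → ∃ n, 0 < ν (Ioo a (r n)) := by
    intro ν hpos
    by_contra h
    push_neg at h
    have h0 : ν (⋃ n, Ioo a (r n)) = 0 :=
      measure_iUnion_null fun n => le_antisymm (h n) zero_le
    exact (hpos.trans_le ((measure_mono cover).trans h0.le)).false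
  obtain ⟨n₁, h1⟩ := H ν₁ (pos_Ioo_one ν₁ hc₁ hs₁ a ha)
  obtain ⟨n₂, h2⟩ := H ν₂ (pos_Ioo_one ν₂ hc₂ hs₂ a ha)
  have hmono : ∀ m n : ℕ, m ≤ n → r m ≤ r n := by
    intro m n hmn
    refine Subtype.coe_le_coe.mp ?_
    show 1 - (1 - a.1) / (m + 2) ≤ 1 - (1 - a.1) / (n + 2)
    have h4 : (m:ℝ) + 2 ≤ n + 2 := by exact_mod_cast by linarith [hmn]
    have : (1 - a.1) / (n + 2) ≤ (1 - a.1) / (m + 2) := by gcongr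
    linarith
  refine ⟨r (max n₁ n₂), hrlt _, hrlt1 _, ?_, ?_⟩
  · exact h1.trans_le (measure_mono (Ioo_subset_Ioo_right (hmono _ _ (le_max_left _ _))))
  · exact h2.trans_le (measure_mono (Ioo_subset_Ioo_right (hmono _ _ (le_max_right _ _))))

lemma unit_zero_lt_one : (0:unitInterval) < 1 := by
  refine Subtype.coe_lt_coe.mp ?_
  norm_num

/-- Let `ν₁ ≠ ν₂` be Borel probability measures on `[0,1]` concentrated on `(0,1)` such
that some `z ∈ {0,1}` lies in `supp ν₁ ∩ supp ν₂`. Then there are sequences `(z̃ₙ)`,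
`(ẑₙ)` such that the open intervals `Zₙ` with endpoints `z̃ₙ` and `ẑₙ` are pairwise
disjoint and `ν₁(Zₙ) > 0`, `ν₂(Zₙ) > 0` for all `n`. -/
theorem stmt_7 (ν₁ ν₂ : Measure unitInterval)
    [IsProbabilityMeasure ν₁] [IsProbabilityMeasure ν₂] (hne : ν₁ ≠ ν₂)
    (hconc₁ : ν₁ (Set.Ioo (0 : unitInterval) 1) = 1)
    (hconc₂ : ν₂ (Set.Ioo (0 : unitInterval) 1) = 1)
    (z : unitInterval) (hz01 : z ∈ ({0, 1} : Set unitInterval))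
    (hz : z ∈ msupport ν₁ ∩ msupport ν₂) :
    ∃ ztil zhat : ℕ → unitInterval,
      Pairwise (Function.onFun Disjoint
        (fun n => Set.Ioo (min (ztil n) (zhat n)) (max (ztil n) (zhat n)))) ∧
      ∀ n : ℕ, 0 < ν₁ (Set.Ioo (min (ztil n) (zhat n)) (max (ztil n) (zhat n))) ∧
        0 < ν₂ (Set.Ioo (min (ztil n) (zhat n)) (max (ztil n) (zhat n))) := by
  obtain ⟨hs₁, hs₂⟩ := hz
  suffices h : ∃ ztil zhat : ℕ → unitInterval, (∀ n, ztil n < zhat n) ∧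
      Pairwise (Function.onFun Disjoint (fun n => Set.Ioo (ztil n) (zhat n))) ∧
      ∀ n, 0 < ν₁ (Set.Ioo (ztil n) (zhat n)) ∧ 0 < ν₂ (Set.Ioo (ztil n) (zhat n)) by
    obtain ⟨zt, zh, hlt, hdisj, hpos⟩ := h
    have key : ∀ n, Set.Ioo (min (zt n) (zh n)) (max (zt n) (zh n)) = Set.Ioo (zt n) (zh n) :=
      fun n => by rw [min_eq_left (hlt n).le, max_eq_right (hlt n).le]
    refine ⟨zt, zh, ?_, ?_⟩
    · intro m n hmn
      simpa only [Function.onFun, key] using hdisj hmn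
    · intro n
      simpa only [key] using hpos n
  rcases hz01 with hz0 | hz1
  · -- z = 0
    subst hz0
    have step : ∀ a : {x : unitInterval // 0 < x}, ∃ b : {x : unitInterval // 0 < x},
        b.1 < a.1 ∧ 0 < ν₁ (Set.Ioo b.1 a.1) ∧ 0 < ν₂ (Set.Ioo b.1 a.1) := by
      rintro ⟨a, ha⟩
      obtain ⟨b, hb0, hba, h1, h2⟩ := exists_step0 ν₁ ν₂ hconc₁ hconc₂ hs₁ hs₂ a ha
      exact ⟨⟨b, hb0⟩, hba, h1, h2⟩
    choose f hf1 hf2 hf3 using step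
    set A : ℕ → {x : unitInterval // 0 < x} :=
      fun n => Nat.rec ⟨1, unit_zero_lt_one⟩ (fun _ p => f p) n with hA
    have hAsucc : ∀ n, A (n + 1) = f (A n) := fun n => rfl
    have hanti : StrictAnti (fun n => (A n).1) :=
      strictAnti_nat_of_succ_lt (fun n => by rw [hAsucc]; exact hf1 _)
    refine ⟨fun n => (A (n + 1)).1, fun n => (A n).1, fun n => hanti (Nat.lt_succ_self n), ?_, ?_⟩
    · intro m n hmn
      have key : ∀ m n : ℕ, m < n →
          Disjoint (Set.Ioo (A (m+1)).1 (A m).1) (Set.Ioo (A (n+1)).1 (A n).1) := by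
        intro m n h
        rw [Set.disjoint_left]
        intro x hx1 hx2
        exact absurd (hx2.2.trans_le (hanti.antitone (show m + 1 ≤ n by omega))) (not_lt.mpr hx1.1.le)
      rcases lt_or_gt_of_ne hmn with h | h
      · exact key m n h
      · exact (key n m h).symm
    · intro n
      beta_reduce
      rw [hAsucc]
      exact ⟨hf2 _, hf3 _⟩
  · -- z = 1
    simp only [Set.mem_singleton_iff] at hz1
    subst hz1
    have step : ∀ a : {x : unitInterval // x < 1}, ∃ b : {x : unitInterval // x < 1},
        a.1 < b.1 ∧ 0 < ν₁ (Set.Ioo a.1 b.1) ∧ 0 < ν₂ (Set.Ioo a.1 b.1) := by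
      rintro ⟨a, ha⟩
      obtain ⟨b, hab, hb1, h1, h2⟩ := exists_step1 ν₁ ν₂ hconc₁ hconc₂ hs₁ hs₂ a ha
      exact ⟨⟨b, hb1⟩, hab, h1, h2⟩
    choose f hf1 hf2 hf3 using step
    set A : ℕ → {x : unitInterval // x < 1} :=
      fun n => Nat.rec ⟨0, unit_zero_lt_one⟩ (fun _ p => f p) n with hA
    have hAsucc : ∀ n, A (n + 1) = f (A n) := fun n => rfl
    have hmono : StrictMono (fun n => (A n).1) :=
      strictMono_nat_of_lt_succ (fun n => by rw [hAsucc]; exact hf1 _)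
    refine ⟨fun n => (A n).1, fun n => (A (n + 1)).1, fun n => hmono (Nat.lt_succ_self n), ?_, ?_⟩
    · intro m n hmn
      have key : ∀ m n : ℕ, m < n →
          Disjoint (Set.Ioo (A m).1 (A (m+1)).1) (Set.Ioo (A n).1 (A (n+1)).1) := by
        intro m n h
        rw [Set.disjoint_left]
        intro x hx1 hx2
        exact absurd ((hmono.monotone (show m + 1 ≤ n by omega)).trans_lt hx2.1) (not_lt.mpr hx1.2.le)
      rcases lt_or_gt_of_ne hmn with h | h
      · exact key m n h
      · exact (key n m h).symm
    · intro n
      beta_reduce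
      rw [hAsucc]
      exact ⟨hf2 _, hf3 _⟩
end

section
/- Let Γ be a set of continuous maps [0,1] → [0,1], and let I = {I₁, …, I_m} be a finite covering of [0,1] by closed intervals such that for every g ∈ Γ and every I ∈ I: (1) g is monotone on I; (2) there exists J ∈ I with g(I) ⊆ J. Then for every g₁, g₂, …, gₙ ∈ Γ, the total variation of the composition g₁∘g₂∘⋯∘gₙ on [0,1] is at most m². -/
open MeasureTheory

/-- Composition `g₁ ∘ g₂ ∘ ⋯ ∘ gₙ` of a finite list of self-maps. -/
def compAll {X : Type*} (l : List (X → X)) : X → X :=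
  l.foldr (· ∘ ·) id

lemma evar_val (h : unitInterval → unitInterval) (s : Set unitInterval) :
    eVariationOn (fun x => (h x : ℝ)) s = eVariationOn h s := rfl

lemma evar_neg (f : unitInterval → ℝ) (s : Set unitInterval) :
    eVariationOn (fun x => -(f x)) s = eVariationOn f s := by
  simp only [eVariationOn, edist_neg_neg]

/-- Let `Γ` be a set of continuous self-maps of `[0,1]` and `I₁, …, I_m` a finite
covering of `[0,1]` by closed intervals such that every `g ∈ Γ` is monotone on each `Iᵢ`
and maps each `Iᵢ` into some `Iⱼ`. Then the total variation of any composition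
`g₁ ∘ ⋯ ∘ gₙ` of maps from `Γ` on `[0,1]` is at most `m²`. -/
theorem stmt_9 (Γ : Set (unitInterval → unitInterval))
    (hΓcont : ∀ g ∈ Γ, Continuous g)
    (m : ℕ) (I : Fin m → unitInterval × unitInterval)
    (hcover : ∀ x : unitInterval, ∃ i : Fin m, x ∈ Set.Icc (I i).1 (I i).2)
    (hmono : ∀ g ∈ Γ, ∀ i : Fin m,
      MonotoneOn g (Set.Icc (I i).1 (I i).2) ∨ AntitoneOn g (Set.Icc (I i).1 (I i).2))
    (hmaps : ∀ g ∈ Γ, ∀ i : Fin m, ∃ j : Fin m,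
      g '' Set.Icc (I i).1 (I i).2 ⊆ Set.Icc (I j).1 (I j).2) :
    ∀ l : List (unitInterval → unitInterval), l ≠ [] → (∀ g ∈ l, g ∈ Γ) →
      eVariationOn (compAll l) Set.univ ≤ (m : ENNReal) ^ 2 := by
  intro l _ hl
  -- Step 1: compAll l is monotone/antitone on each interval and maps each into some interval
  have key : ∀ L : List (unitInterval → unitInterval), (∀ g ∈ L, g ∈ Γ) → ∀ i : Fin m,
      (MonotoneOn (compAll L) (Set.Icc (I i).1 (I i).2) ∨
        AntitoneOn (compAll L) (Set.Icc (I i).1 (I i).2)) ∧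
      ∃ j : Fin m, compAll L '' Set.Icc (I i).1 (I i).2 ⊆ Set.Icc (I j).1 (I j).2 := by
    intro L
    induction L with
    | nil =>
      intro _ i
      refine ⟨Or.inl fun a _ b _ hab => hab, i, ?_⟩
      simp [compAll]
    | cons g L ih =>
      intro hmem i
      have hg : g ∈ Γ := hmem g List.mem_cons_self
      obtain ⟨hmL, j, hjL⟩ := ih (fun g' hg' => hmem g' (List.mem_cons_of_mem g hg')) i
      have hcomp_eq : compAll (g :: L) = g ∘ compAll L := rfl
      have hmapsto : Set.MapsTo (compAll L) (Set.Icc (I i).1 (I i).2)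
          (Set.Icc (I j).1 (I j).2) := fun x hx => hjL ⟨x, hx, rfl⟩
      constructor
      · rw [hcomp_eq]
        rcases hmono g hg j with hgj | hgj <;> rcases hmL with hm | hm
        · exact Or.inl fun a ha b hb hab =>
            hgj (hmapsto ha) (hmapsto hb) (hm ha hb hab)
        · exact Or.inr fun a ha b hb hab =>
            hgj (hmapsto hb) (hmapsto ha) (hm ha hb hab)
        · exact Or.inr fun a ha b hb hab =>
            hgj (hmapsto ha) (hmapsto hb) (hm ha hb hab)
        · exact Or.inl fun a ha b hb hab =>
            hgj (hmapsto hb) (hmapsto ha) (hm ha hb hab)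
      · obtain ⟨k, hk⟩ := hmaps g hg j
        exact ⟨k, by rw [hcomp_eq, Set.image_comp]; exact (Set.image_mono hjL).trans hk⟩
  set h := compAll l with hh
  set F : unitInterval → ℝ := fun x => (h x : ℝ) with hF
  -- the endpoint set
  set E : Finset unitInterval :=
    (Finset.univ.image fun i => (I i).1) ∪ (Finset.univ.image fun i => (I i).2) with hE
  have hmemE1 : ∀ i : Fin m, (I i).1 ∈ E := fun i =>
    Finset.mem_union_left _ (Finset.mem_image_of_mem _ (Finset.mem_univ i))
  have hmemE2 : ∀ i : Fin m, (I i).2 ∈ E := fun i =>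
    Finset.mem_union_right _ (Finset.mem_image_of_mem _ (Finset.mem_univ i))
  have h0E : (0 : unitInterval) ∈ E := by
    obtain ⟨i, hi⟩ := hcover 0
    have : (I i).1 = 0 := le_antisymm hi.1 unitInterval.nonneg'
    rw [← this]; exact hmemE1 i
  have h1E : (1 : unitInterval) ∈ E := by
    obtain ⟨i, hi⟩ := hcover 1
    have : (I i).2 = 1 := le_antisymm unitInterval.le_one' hi.2
    rw [← this]; exact hmemE2 i
  have hm1 : 1 ≤ m := by
    obtain ⟨i, _⟩ := hcover 0
    exact i.pos
  set N := E.card with hN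
  have hN1 : 1 ≤ N := Finset.card_pos.mpr ⟨0, h0E⟩
  have hNle : N ≤ 2 * m := by
    calc N ≤ (Finset.univ.image fun i : Fin m => (I i).1).card +
        (Finset.univ.image fun i : Fin m => (I i).2).card := Finset.card_union_le _ _
      _ ≤ m + m := add_le_add
          ((Finset.card_image_le).trans (by simp))
          ((Finset.card_image_le).trans (by simp))
      _ = 2 * m := by ring
  set e : Fin N → unitInterval := fun k => ((E.orderIsoOfFin rfl k : E) : unitInterval) with he
  have heE : ∀ k, e k ∈ E := fun k => (E.orderIsoOfFin rfl k).2
  have hemono : Monotone e := fun a b hab =>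
    Subtype.coe_le_coe.mpr ((E.orderIsoOfFin rfl).monotone hab)
  have hesurj : ∀ c ∈ E, ∃ k, e k = c := fun c hc =>
    ⟨(E.orderIsoOfFin rfl).symm ⟨c, hc⟩,
      congrArg Subtype.val ((E.orderIsoOfFin rfl).apply_symm_apply ⟨c, hc⟩)⟩
  have hN0 : 0 < N := hN1
  have he0 : e ⟨0, hN0⟩ = 0 := by
    obtain ⟨k, hk⟩ := hesurj 0 h0E
    refine le_antisymm ?_ unitInterval.nonneg'
    rw [← hk]
    exact hemono (Fin.le_def.mpr (Nat.zero_le _))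
  have hNlt : N - 1 < N := Nat.sub_lt hN0 one_pos
  have helast : e ⟨N - 1, hNlt⟩ = 1 := by
    obtain ⟨k, hk⟩ := hesurj 1 h1E
    refine le_antisymm unitInterval.le_one' ?_
    rw [← hk]
    have hkle : (k : ℕ) ≤ N - 1 := by have := k.isLt; omega
    exact hemono (Fin.le_def.mpr (by simpa using hkle))
  -- the gap bound
  have gap : ∀ x y : unitInterval, x ≤ y → (∀ c ∈ E, c ≤ x ∨ y ≤ c) →
      eVariationOn F (Set.univ ∩ Set.Icc x y) ≤ 1 := by
    intro x y hxy hadj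
    rcases eq_or_lt_of_le hxy with rfl | hlt
    · have hsub : Set.univ ∩ Set.Icc x x ⊆ {x} := by simp [Set.Icc_self]
      rw [eVariationOn.subsingleton F (Set.subsingleton_singleton.anti hsub)]
      exact zero_le
    · have hxr : (x : ℝ) < (y : ℝ) := hlt
      have hx0 : (0 : ℝ) ≤ x := x.2.1
      have hy1 : (y : ℝ) ≤ 1 := y.2.2
      set μ : unitInterval := ⟨((x : ℝ) + y) / 2, by constructor <;> [linarith; linarith]⟩ with hμ
      have hxμ : x < μ := by
        rw [← Subtype.coe_lt_coe]
        show (x : ℝ) < ((x : ℝ) + y) / 2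
        linarith
      have hμy : μ < y := by
        rw [← Subtype.coe_lt_coe]
        show ((x : ℝ) + y) / 2 < (y : ℝ)
        linarith
      obtain ⟨i, hμi⟩ := hcover μ
      have hl1 : (I i).1 ≤ x := by
        rcases hadj (I i).1 (hmemE1 i) with h' | h'
        · exact h'
        · exact absurd (h'.trans_lt (hμi.1.trans_lt hμy)) (lt_irrefl y)
      have hr1 : y ≤ (I i).2 := by
        rcases hadj (I i).2 (hmemE2 i) with h' | h'
        · exact absurd ((hxμ.trans_le hμi.2).trans_le h') (lt_irrefl x)
        · exact h'
      have hsub : Set.Icc x y ⊆ Set.Icc (I i).1 (I i).2 := Set.Icc_subset_Icc hl1 hr1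
      have hseteq : Set.univ ∩ Set.Icc x y = Set.Icc (I i).1 (I i).2 ∩ Set.Icc x y := by
        rw [Set.univ_inter, Set.inter_eq_right.mpr hsub]
      have hxi : x ∈ Set.Icc (I i).1 (I i).2 := hsub ⟨le_rfl, hxy⟩
      have hyi : y ∈ Set.Icc (I i).1 (I i).2 := hsub ⟨hxy, le_rfl⟩
      rcases (key l hl i).1 with hm' | hm'
      · have hFm : MonotoneOn F (Set.Icc (I i).1 (I i).2) := fun a ha b hb hab =>
          Subtype.coe_le_coe.mpr (hm' ha hb hab)
        rw [hseteq]
        refine (hFm.eVariationOn_le hxi hyi).trans ?_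
        refine le_trans (ENNReal.ofReal_le_ofReal ?_) (by norm_num : ENNReal.ofReal 1 ≤ 1)
        have := (h y).2.2
        have := (h x).2.1
        simp only [hF]
        linarith
      · have hFm : MonotoneOn (fun t => -(F t)) (Set.Icc (I i).1 (I i).2) :=
          fun a ha b hb hab => neg_le_neg (Subtype.coe_le_coe.mpr (hm' ha hb hab))
        rw [hseteq, ← evar_neg F]
        refine (hFm.eVariationOn_le hxi hyi).trans ?_
        refine le_trans (ENNReal.ofReal_le_ofReal ?_) (by norm_num : ENNReal.ofReal 1 ≤ 1)
        have := (h x).2.2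
        have := (h y).2.1
        simp only [hF]
        linarith
  -- chain
  have chain : ∀ k : ℕ, ∀ hk : k < N,
      eVariationOn F (Set.univ ∩ Set.Icc (e ⟨0, hN0⟩) (e ⟨k, hk⟩)) ≤ (k : ENNReal) := by
    intro k
    induction k with
    | zero =>
      intro hk
      have hsub : Set.univ ∩ Set.Icc (e ⟨0, hN0⟩) (e ⟨0, hk⟩) ⊆ {e ⟨0, hN0⟩} := by
        simp [Set.Icc_self]
      rw [eVariationOn.subsingleton F (Set.subsingleton_singleton.anti hsub)]
      simp
    | succ k ih =>
      intro hk
      have hk' : k < N := by omega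
      have h1 : e ⟨0, hN0⟩ ≤ e ⟨k, hk'⟩ := hemono (by simp [Fin.le_def])
      have h2 : e ⟨k, hk'⟩ ≤ e ⟨k + 1, hk⟩ := hemono (by simp [Fin.le_def])
      have hsplit := eVariationOn.Icc_add_Icc F (s := Set.univ) h1 h2 (Set.mem_univ _)
      rw [← hsplit]
      have hadj : ∀ c ∈ E, c ≤ e ⟨k, hk'⟩ ∨ e ⟨k + 1, hk⟩ ≤ c := by
        intro c hc
        obtain ⟨j, rfl⟩ := hesurj c hc
        rcases le_or_gt (j : ℕ) k with hjk | hjk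
        · exact Or.inl (hemono (Fin.le_def.mpr hjk))
        · exact Or.inr (hemono (Fin.le_def.mpr hjk))
      calc eVariationOn F (Set.univ ∩ Set.Icc (e ⟨0, hN0⟩) (e ⟨k, hk'⟩)) +
            eVariationOn F (Set.univ ∩ Set.Icc (e ⟨k, hk'⟩) (e ⟨k + 1, hk⟩))
          ≤ (k : ENNReal) + 1 := add_le_add (ih hk') (gap _ _ h2 hadj)
        _ = ((k + 1 : ℕ) : ENNReal) := by push_cast; ring
  -- conclude
  have huniv : (Set.univ : Set unitInterval) =
      Set.univ ∩ Set.Icc (e ⟨0, hN0⟩) (e ⟨N - 1, hNlt⟩) := by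
    rw [he0, helast, Set.univ_inter]
    ext x
    simp only [Set.mem_Icc, Set.mem_univ, true_iff]
    exact ⟨unitInterval.nonneg', unitInterval.le_one'⟩
  have hfin : eVariationOn h Set.univ ≤ ((N - 1 : ℕ) : ENNReal) := by
    rw [← evar_val h, ← hF, huniv]
    exact chain (N - 1) hNlt
  refine hfin.trans ?_
  have harith : N - 1 ≤ m ^ 2 := by
    have h2 : 2 * m * 1 ≤ m ^ 2 + 1 ^ 2 := two_mul_le_add_sq m 1
    have : m ^ 2 + 1 ≥ 2 * m := by omega
    omega
  calc ((N - 1 : ℕ) : ENNReal) ≤ ((m ^ 2 : ℕ) : ENNReal) := Nat.cast_le.mpr harith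
    _ = (m : ENNReal) ^ 2 := by push_cast; ring
end

section
/- Let f₁, f₂: [0,1] → [0,1] be continuous functions such that f₂ is nonexpansive (Lipschitz with constant ≤ 1) and such that for every m ∈ ℕ, the composition f₂∘f₁^m is Lipschitz with constant ≤ 1. Then for every finite sequence i₁, …, i_{n−1} ∈ {1,2}, the total variation of f₂∘f_{i₁}∘⋯∘f_{i_{n−1}} on [0,1] is at most 1. -/
open MeasureTheory

lemma lip_aux (f₁ f₂ : unitInterval → unitInterval)
    (hcomp : ∀ m : ℕ, LipschitzWith 1 (f₂ ∘ f₁^[m])) :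
    ∀ l : List (unitInterval → unitInterval), (∀ g ∈ l, g = f₁ ∨ g = f₂) →
      ∀ m : ℕ, LipschitzWith 1 (f₂ ∘ f₁^[m] ∘ compAll l) := by
  intro l
  induction l with
  | nil =>
    intro _ m
    simpa [compAll] using hcomp m
  | cons g t ih =>
    intro hmem m
    have ht : ∀ g ∈ t, g = f₁ ∨ g = f₂ := fun g hg => hmem g (List.mem_cons_of_mem _ hg)
    rcases hmem g List.mem_cons_self with hg | hg <;> rw [hg]
    · have := ih ht (m + 1)
      have heq : f₂ ∘ f₁^[m] ∘ compAll (f₁ :: t) = f₂ ∘ f₁^[m + 1] ∘ compAll t := by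
        funext x
        simp [compAll, Function.iterate_succ_apply, Function.comp]
      rw [heq]; exact this
    · have h1 := ih ht 0
      have h2 := hcomp m
      have heq : f₂ ∘ f₁^[m] ∘ compAll (f₂ :: t) =
          (f₂ ∘ f₁^[m]) ∘ (f₂ ∘ f₁^[0] ∘ compAll t) := by
        funext x
        simp [compAll, Function.comp]
      rw [heq]
      simpa using h2.comp h1

lemma evar_of_lip (F : unitInterval → unitInterval) (hF : LipschitzWith 1 F) :
    eVariationOn F Set.univ ≤ 1 := by
  apply iSup_le
  rintro ⟨n, u, hu, -⟩
  calc ∑ i ∈ Finset.range n, edist (F (u (i + 1))) (F (u i))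
      ≤ ∑ i ∈ Finset.range n, edist (u (i + 1)) (u i) := by
        refine Finset.sum_le_sum fun i _ => ?_
        simpa using hF (u (i + 1)) (u i)
    _ = ∑ i ∈ Finset.range n, ENNReal.ofReal ((u (i + 1) : ℝ) - (u i : ℝ)) := by
        refine Finset.sum_congr rfl fun i hi => ?_
        rw [Subtype.edist_eq, edist_dist, Real.dist_eq, abs_of_nonneg]
        exact sub_nonneg.2 (Subtype.coe_le_coe.2 (hu (Nat.le_succ _)))
    _ = ENNReal.ofReal (∑ i ∈ Finset.range n, ((u (i + 1) : ℝ) - (u i : ℝ))) := by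
        rw [ENNReal.ofReal_sum_of_nonneg]
        exact fun i _ => sub_nonneg.2 (Subtype.coe_le_coe.2 (hu (Nat.le_succ _)))
    _ = ENNReal.ofReal ((u n : ℝ) - (u 0 : ℝ)) := by
        rw [Finset.sum_range_sub fun i => ((u i : ℝ))]
    _ ≤ 1 := by
        rw [← ENNReal.ofReal_one]
        apply ENNReal.ofReal_le_ofReal
        have h1 := (u n).2.2
        have h2 := (u 0).2.1
        linarith

/-- Let `f₁, f₂ : [0,1] → [0,1]` be continuous, `f₂` nonexpansive and `f₂ ∘ f₁^m`
Lipschitz with constant `≤ 1` for every `m`. Then any composition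
`f₂ ∘ f_{i₁} ∘ ⋯ ∘ f_{i_{n-1}}` with `iⱼ ∈ {1,2}` has total variation at most `1`
on `[0,1]`. -/
theorem stmt_12 (f₁ f₂ : unitInterval → unitInterval)
    (hf₁ : Continuous f₁) (hf₂ : Continuous f₂)
    (hne : LipschitzWith 1 f₂)
    (hcomp : ∀ m : ℕ, LipschitzWith 1 (f₂ ∘ f₁^[m])) :
    ∀ l : List (unitInterval → unitInterval), (∀ g ∈ l, g = f₁ ∨ g = f₂) →
      eVariationOn (f₂ ∘ compAll l) Set.univ ≤ 1 := by
  intro l hl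
  have h := lip_aux f₁ f₂ hcomp l hl 0
  simp only [Function.iterate_zero] at h
  exact evar_of_lip _ (by simpa using h)
end
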